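/- arXiv:math/9907021 — 7 statements merged into one kernel-verified Lean document; each statement's English description precedes it below -/
import Mathlib

section
/- Let (A, d) be a symmetrizable Cartan datum of rank r and let m be a positive integer; set M_i = m/gcd(m, 2·d_i). Then for all i, j the integer M_j divides M_i·A_{ij}, so that Ã_{ij} := (M_i/M_j)·A_{ij} is an integer; moreover Ã is again a symmetrizable Cartan datum: Ã_{ii} = 2, Ã_{ij} ≤ 0 for i ≠ j, and with the positive integers d̃_i := M_i²·d_i one has d̃_j·Ã_{ij} = d̃_i·Ã_{ji} for all i, j. -/
/-- For a symmetrizable Cartan datum `(A, d)` of rank `r` and a positive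
integer `m`, with `M i = m / gcd (m, 2 * d i)`, the integer `M j` divides `M i * A i j`,
so `Ã i j = (M i / M j) * A i j` is an integer; moreover `Ã` is again a symmetrizable
Cartan datum with symmetrizing positive integers `d̃ i = (M i)^2 * d i`. -/
theorem stmt0 (r : ℕ) (A : Fin r → Fin r → ℤ) (d : Fin r → ℕ)
    (hd : ∀ i, 0 < d i)
    (hA2 : ∀ i, A i i = 2)
    (hAneg : ∀ i j, i ≠ j → A i j ≤ 0)
    (hsym : ∀ i j, (d j : ℤ) * A i j = (d i : ℤ) * A j i)
    (m : ℕ) (hm : 0 < m)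
    (M : Fin r → ℕ) (hM : ∀ i, M i = m / Nat.gcd m (2 * d i))
    (Atilde : Fin r → Fin r → ℤ)
    (hAtilde : ∀ i j, Atilde i j = (M i : ℤ) * A i j / (M j : ℤ)) :
    (∀ i j, (M j : ℤ) ∣ (M i : ℤ) * A i j) ∧
    (∀ i, Atilde i i = 2) ∧
    (∀ i j, i ≠ j → Atilde i j ≤ 0) ∧
    (∀ i, 0 < (M i) ^ 2 * d i) ∧
    (∀ i j, ((M j : ℤ) ^ 2 * (d j : ℤ)) * Atilde i j
      = ((M i : ℤ) ^ 2 * (d i : ℤ)) * Atilde j i) := by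
  set g : Fin r → ℕ := fun i => Nat.gcd m (2 * d i) with hg
  have hMg : ∀ i, M i * g i = m := by
    intro i; rw [hM i]; exact Nat.div_mul_cancel (Nat.gcd_dvd_left _ _)
  have hMpos : ∀ i, 0 < M i := by
    intro i
    rcases Nat.eq_zero_or_pos (M i) with h | h
    · exfalso; have := hMg i; rw [h] at this; simp at this; omega
    · exact h
  have key : ∀ i j, (g i : ℤ) ∣ (g j : ℤ) * A i j := by
    intro i j
    have h1 : (g i : ℤ) ∣ (m : ℤ) * A i j :=
      Dvd.dvd.mul_right (Int.natCast_dvd_natCast.mpr (Nat.gcd_dvd_left _ _)) _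
    have h2 : (g i : ℤ) ∣ ((2 * d j : ℕ) : ℤ) * A i j := by
      have he : ((2 * d j : ℕ) : ℤ) * A i j = ((2 * d i : ℕ) : ℤ) * A j i := by
        push_cast; linarith [hsym i j]
      rw [he]
      exact Dvd.dvd.mul_right (Int.natCast_dvd_natCast.mpr (Nat.gcd_dvd_right _ _)) _
    have h3 := Int.dvd_coe_gcd h1 h2
    rw [Int.gcd_mul_right] at h3
    have h4 : ((Int.gcd (m : ℤ) ((2 * d j : ℕ) : ℤ) * (A i j).natAbs : ℕ) : ℤ)
        ∣ (g j : ℤ) * A i j := by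
      have hgj : Int.gcd (m : ℤ) ((2 * d j : ℕ) : ℤ) = g j :=
        Int.gcd_natCast_natCast _ _
      rw [hgj]
      push_cast
      exact mul_dvd_mul_left _ ((abs_dvd _ _).mpr dvd_rfl)
    exact h3.trans h4
  have hdvd : ∀ i j, (M j : ℤ) ∣ (M i : ℤ) * A i j := by
    intro i j
    have h := mul_dvd_mul_left ((M i : ℤ) * (M j : ℤ)) (key i j)
    have e1 : (M i : ℤ) * (M j : ℤ) * (g i : ℤ) = (M j : ℤ) * m := by
      have := hMg i
      push_cast [← this]; ring
    have e2 : (M i : ℤ) * (M j : ℤ) * ((g j : ℤ) * A i j)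
        = (m : ℤ) * ((M i : ℤ) * A i j) := by
      have := hMg j
      push_cast [← this]; ring
    rw [e1, e2] at h
    rcases h with ⟨c, hc⟩
    refine ⟨c, ?_⟩
    have hm' : (m : ℤ) ≠ 0 := by exact_mod_cast hm.ne'
    apply mul_left_cancel₀ hm'
    rw [hc]; ring
  have hMne : ∀ i, (M i : ℤ) ≠ 0 := fun i => by exact_mod_cast (hMpos i).ne'
  refine ⟨hdvd, ?_, ?_, ?_, ?_⟩
  · intro i
    rw [hAtilde, hA2, Int.mul_ediv_cancel_left _ (hMne i)]
  · intro i j hij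
    obtain ⟨c, hc⟩ := hdvd i j
    rw [hAtilde, hc, Int.mul_ediv_cancel_left _ (hMne j)]
    have h1 : (M i : ℤ) * A i j ≤ 0 :=
      mul_nonpos_of_nonneg_of_nonpos (by positivity) (hAneg i j hij)
    have h2 : (0 : ℤ) < (M j : ℤ) := by exact_mod_cast hMpos j
    nlinarith [hc]
  · intro i
    exact Nat.mul_pos (pow_pos (hMpos i) 2) (hd i)
  · intro i j
    obtain ⟨c, hc⟩ := hdvd i j
    obtain ⟨c', hc'⟩ := hdvd j i
    rw [hAtilde i j, hAtilde j i, hc, hc', Int.mul_ediv_cancel_left _ (hMne j),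
      Int.mul_ediv_cancel_left _ (hMne i)]
    apply mul_left_cancel₀ (mul_ne_zero (hMne i) (hMne j))
    linear_combination (-(M i : ℤ) * (M j : ℤ) ^ 2 * (d j : ℤ)) * hc
      + ((M i : ℤ) ^ 2 * (M j : ℤ) * (d i : ℤ)) * hc'
      + ((M i : ℤ) ^ 2 * (M j : ℤ) ^ 2) * (hsym i j)
end

section
/- Let (A, d) be a symmetrizable Cartan datum of rank r such that every d_i lies in {1, d} for a fixed d ∈ {2, 3}, let m be a positive integer, and set M = m/gcd(m, 2). If d divides M, then the dual matrix is the transpose of A, i.e. Ã_{ij} = A_{ji} for all i, j; if d does not divide M, then Ã_{ij} = A_{ij} for all i, j. -/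
lemma gcdmod (m k : ℕ) : Nat.gcd m k = Nat.gcd (m % k) k := by
  rw [Nat.gcd_comm m k, Nat.gcd_rec]

lemma key2 (m : ℕ) :
    (2 ∣ m / Nat.gcd m 2 → 2 * (m / Nat.gcd m 4) = m / Nat.gcd m 2) ∧
    (¬ 2 ∣ m / Nat.gcd m 2 → m / Nat.gcd m 4 = m / Nat.gcd m 2) := by
  rw [gcdmod m 2, gcdmod m 4]
  have h : m % 4 = 0 ∨ m % 4 = 1 ∨ m % 4 = 2 ∨ m % 4 = 3 := by omega
  rcases h with h|h|h|h
  · rw [h, show m % 2 = 0 by omega]; norm_num; omega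
  · rw [h, show m % 2 = 1 by omega]; norm_num; omega
  · rw [h, show m % 2 = 0 by omega]; norm_num; omega
  · rw [h, show m % 2 = 1 by omega]; norm_num; omega

lemma key3 (m : ℕ) :
    (3 ∣ m / Nat.gcd m 2 → 3 * (m / Nat.gcd m 6) = m / Nat.gcd m 2) ∧
    (¬ 3 ∣ m / Nat.gcd m 2 → m / Nat.gcd m 6 = m / Nat.gcd m 2) := by
  rw [gcdmod m 2, gcdmod m 6]
  have h : m % 6 = 0 ∨ m % 6 = 1 ∨ m % 6 = 2 ∨ m % 6 = 3 ∨ m % 6 = 4 ∨ m % 6 = 5 := by omega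
  rcases h with h|h|h|h|h|h
  · rw [h, show m % 2 = 0 by omega]; norm_num; omega
  · rw [h, show m % 2 = 1 by omega]; norm_num; omega
  · rw [h, show m % 2 = 0 by omega]; norm_num; omega
  · rw [h, show m % 2 = 1 by omega]; norm_num; omega
  · rw [h, show m % 2 = 0 by omega]; norm_num; omega
  · rw [h, show m % 2 = 1 by omega]; norm_num; omega

/-- For a symmetrizable Cartan datum `(A, d)` with every `d i ∈ {1, dd}` for a
fixed `dd ∈ {2, 3}`, a positive integer `m`, and `M = m / gcd (m, 2)`: if `dd ∣ M` then the
dual matrix `Ã i j = (M i / M j) * A i j` is the transpose of `A`, and otherwise `Ã = A`. -/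
theorem stmt2 (r : ℕ) (A : Fin r → Fin r → ℤ) (d : Fin r → ℕ)
    (hd : ∀ i, 0 < d i)
    (hA2 : ∀ i, A i i = 2)
    (hAneg : ∀ i j, i ≠ j → A i j ≤ 0)
    (hsym : ∀ i j, (d j : ℤ) * A i j = (d i : ℤ) * A j i)
    (dd : ℕ) (hdd : dd = 2 ∨ dd = 3)
    (hdval : ∀ i, d i = 1 ∨ d i = dd)
    (m : ℕ) (hm : 0 < m)
    (M : Fin r → ℕ) (hM : ∀ i, M i = m / Nat.gcd m (2 * d i))
    (Atilde : Fin r → Fin r → ℤ)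
    (hAtilde : ∀ i j, Atilde i j = (M i : ℤ) * A i j / (M j : ℤ)) :
    (dd ∣ m / Nat.gcd m 2 → ∀ i j, Atilde i j = A j i) ∧
    (¬ dd ∣ m / Nat.gcd m 2 → ∀ i j, Atilde i j = A i j) := by
  have hMpos : ∀ i, 0 < M i := by
    intro i
    rw [hM]
    exact Nat.div_pos (Nat.le_of_dvd hm (Nat.gcd_dvd_left _ _)) (Nat.gcd_pos_of_pos_left _ hm)
  constructor
  · intro hdvd i j
    have key : ∀ k, M k * d k = m / Nat.gcd m 2 := by
      intro k
      rcases hdval k with h | h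
      · rw [hM, h, mul_one, mul_one]
      · rw [hM, h]
        rcases hdd with h2 | h3
        · subst h2
          have := (key2 m).1 hdvd
          norm_num
          omega
        · subst h3
          have := (key3 m).1 hdvd
          norm_num
          omega
    have hMd : ((M i : ℤ) * d i) = ((M j : ℤ) * d j) := by
      have h1 := key i; have h2 := key j
      have : M i * d i = M j * d j := by omega
      exact_mod_cast this
    have hdjne : (d j : ℤ) ≠ 0 := by
      have := hd j; positivity
    have hmain : (M i : ℤ) * A i j = (M j : ℤ) * A j i := by
      have h1 : (d j : ℤ) * ((M i : ℤ) * A i j) = (d j : ℤ) * ((M j : ℤ) * A j i) := by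
        calc (d j : ℤ) * ((M i : ℤ) * A i j)
            = (M i : ℤ) * ((d j : ℤ) * A i j) := by ring
          _ = (M i : ℤ) * ((d i : ℤ) * A j i) := by rw [hsym i j]
          _ = ((M i : ℤ) * (d i : ℤ)) * A j i := by ring
          _ = ((M j : ℤ) * (d j : ℤ)) * A j i := by rw [hMd]
          _ = (d j : ℤ) * ((M j : ℤ) * A j i) := by ring
      exact mul_left_cancel₀ hdjne h1
    have hMjne : (M j : ℤ) ≠ 0 := by
      have := hMpos j; positivity
    rw [hAtilde, hmain, Int.mul_ediv_cancel_left _ hMjne]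
  · intro hndvd i j
    have key : ∀ k, M k = m / Nat.gcd m 2 := by
      intro k
      rcases hdval k with h | h
      · rw [hM, h, mul_one]
      · rw [hM, h]
        rcases hdd with h2 | h3
        · subst h2; rw [show (2*2:ℕ) = 4 from rfl]; exact (key2 m).2 hndvd
        · subst h3; rw [show (2*3:ℕ) = 6 from rfl]; exact (key3 m).2 hndvd
    have hMjne : (M j : ℤ) ≠ 0 := by
      have := hMpos j; positivity
    rw [hAtilde, show M i = M j by rw [key i, key j], Int.mul_ediv_cancel_left _ hMjne]
end

section
/- The lattice of special points L := { λ ∈ span(Φ) : (λ, α_i^∨) ∈ M_i·ℤ for all i = 1,…,r } is invariant under the Weyl group W, i.e. w(λ) ∈ L for every w ∈ W and λ ∈ L. -/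
open scoped RealInnerProductSpace

section AuxReflection

variable {E : Type*} [NormedAddCommGroup E] [InnerProductSpace ℝ E]

/-- Reflection in the hyperplane orthogonal to `A`. -/
noncomputable def myrefl (A x : E) : E := x - ((2 / ⟪A, A⟫) * ⟪x, A⟫) • A

lemma myrefl_inner (A : E) (hA : ⟪A, A⟫ ≠ 0) (x y : E) :
    ⟪myrefl A x, myrefl A y⟫ = ⟪x, y⟫ := by
  unfold myrefl
  simp only [inner_sub_left, inner_sub_right, real_inner_smul_left, real_inner_smul_right]
  rw [real_inner_comm A x, real_inner_comm A y]
  field_simp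
  ring

lemma myrefl_invol (A : E) (x : E) : myrefl A (myrefl A x) = x := by
  rcases eq_or_ne ⟪A, A⟫ 0 with h | h
  · simp only [myrefl, h, div_zero, zero_mul, zero_smul, sub_zero]
  · unfold myrefl
    simp only [inner_sub_left, real_inner_smul_left]
    rw [sub_sub, ← add_smul]
    have h0 : 2 / ⟪A, A⟫ * ⟪x, A⟫ + 2 / ⟪A, A⟫ * (⟪x, A⟫ - 2 / ⟪A, A⟫ * ⟪x, A⟫ * ⟪A, A⟫) = 0 := by
      field_simp
      ring
    rw [h0, zero_smul, sub_zero]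

lemma myrefl_sub_smul (A x y : E) (c : ℝ) :
    myrefl A (x - c • y) = myrefl A x - c • myrefl A y := by
  unfold myrefl
  simp only [inner_sub_left, real_inner_smul_left]
  module

lemma myrefl_conj (A B : E) (hA : ⟪A, A⟫ ≠ 0) (x : E) :
    myrefl A (myrefl B (myrefl A x)) = myrefl (myrefl A B) x := by
  have hCC : ⟪myrefl A B, myrefl A B⟫ = ⟪B, B⟫ := myrefl_inner A hA B B
  have hxB : ⟪myrefl A x, B⟫ = ⟪x, myrefl A B⟫ := by
    conv_lhs => rw [← myrefl_invol A B]
    exact myrefl_inner A hA x (myrefl A B)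
  have h1 : myrefl B (myrefl A x)
      = myrefl A x - ((2 / ⟪B, B⟫) * ⟪myrefl A x, B⟫) • B := rfl
  rw [h1, myrefl_sub_smul, myrefl_invol, hxB]
  show _ = x - ((2 / ⟪myrefl A B, myrefl A B⟫) * ⟪x, myrefl A B⟫) • myrefl A B
  rw [hCC]

end AuxReflection

lemma myMfact (m : ℕ) (hm : 0 < m) (n : ℕ) :
    (m / Nat.gcd m n) * n = Nat.lcm m n := by
  have hg : Nat.gcd m n ∣ m := Nat.gcd_dvd_left _ _
  have hgpos : 0 < Nat.gcd m n := Nat.gcd_pos_of_pos_left _ hm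
  have h1 : m / Nat.gcd m n * n * Nat.gcd m n = m * n := by
    rw [mul_right_comm, Nat.div_mul_cancel hg]
  have h2 : Nat.lcm m n * Nat.gcd m n = m * n := by
    rw [mul_comm, Nat.gcd_mul_lcm]
  exact Nat.eq_of_mul_eq_mul_right hgpos (h1.trans h2.symm)

lemma myMdvd (m di dj : ℕ) (hm : 0 < m)
    (kij kji : ℤ) (hk : kij * (2 * (dj : ℤ)) = kji * (2 * (di : ℤ)))
    (hdj : 0 < dj) :
    ((m / Nat.gcd m (2 * dj) : ℕ) : ℤ) ∣ ((m / Nat.gcd m (2 * di) : ℕ) : ℤ) * kij := by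
  set Mi : ℕ := m / Nat.gcd m (2 * di) with hMi
  set Mj : ℕ := m / Nat.gcd m (2 * dj) with hMj
  have hml : (m : ℤ) ∣ ((Mi : ℤ) * (2 * di)) := by
    have : m ∣ Mi * (2 * di) := myMfact m hm (2 * di) ▸ Nat.dvd_lcm_left _ _
    exact_mod_cast Int.natCast_dvd_natCast.mpr this
  have h1 : ((Nat.lcm m (2 * dj) : ℕ) : ℤ) ∣ (Mi : ℤ) * kij * (2 * dj) := by
    have e : (Mi : ℤ) * kij * (2 * dj) = kji * ((Mi : ℤ) * (2 * di)) := by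
      rw [mul_assoc, hk]; ring
    have hmd : (m : ℤ) ∣ (Mi : ℤ) * kij * (2 * dj) := e ▸ hml.mul_left kji
    have hdd : (2 * (dj : ℤ)) ∣ (Mi : ℤ) * kij * (2 * dj) := dvd_mul_left _ _
    have := Int.natCast_dvd.mpr (Nat.lcm_dvd (Int.natCast_dvd.mp hmd)
      ((Int.natCast_dvd (m := 2 * dj)).mp (by exact_mod_cast hdd)))
    simpa [Int.lcm_def] using this
  rw [← myMfact m hm (2 * dj)] at h1
  rw [← hMj] at h1
  have h2dj : (2 * (dj : ℤ)) ≠ 0 := by positivity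
  have h3 : ((Mj : ℤ) * (2 * dj)) ∣ ((Mi : ℤ) * kij) * (2 * dj) := by
    push_cast at h1 ⊢
    convert h1 using 1
  exact (mul_dvd_mul_iff_right h2dj).mp h3

/-- The lattice of special points
`L = {λ ∈ span Φ : ⟪λ, αᵢ^∨⟫ ∈ Mᵢ ℤ for all simple roots αᵢ}` is invariant
under the Weyl group `W` (the subgroup of isometries generated by the
reflections in the roots of a finite crystallographic root system `Φ`). -/
theorem stmt3 {E : Type*} [NormedAddCommGroup E] [InnerProductSpace ℝ E]
    [FiniteDimensional ℝ E]
    (Φ : Finset E) (hΦ0 : (0 : E) ∉ Φ)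
    (coroot : E → E)
    (hco : ∀ α ∈ Φ, coroot α = (2 / ⟪α, α⟫) • α)
    (hcrys : ∀ α ∈ Φ, ∀ β ∈ Φ, ∃ k : ℤ, ⟪β, coroot α⟫ = (k : ℝ))
    (hrefl : ∀ α ∈ Φ, ∀ β ∈ Φ, β - ⟪β, coroot α⟫ • α ∈ Φ)
    (r : ℕ) (a : Fin r → E) (haΦ : ∀ i, a i ∈ Φ)
    (hind : LinearIndependent ℝ a)
    (hspan : Submodule.span ℝ (Set.range a) = Submodule.span ℝ (Φ : Set E))
    (hbase : ∀ β ∈ Φ, ∃ c : Fin r → ℤ, β = ∑ i, (c i : ℝ) • a i ∧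
      ((∀ i, 0 ≤ c i) ∨ (∀ i, c i ≤ 0)))
    (d : E → ℕ) (hd : ∀ α ∈ Φ, 0 < d α ∧ ⟪α, α⟫ = 2 * (d α : ℝ))
    (m : ℕ) (hm : 0 < m)
    (M : E → ℕ) (hMdef : ∀ α, M α = m / Nat.gcd m (2 * d α))
    (W : Subgroup (E ≃ₗᵢ[ℝ] E))
    (hW : W = Subgroup.closure
      { w : E ≃ₗᵢ[ℝ] E | ∃ α ∈ Φ, ∀ x, w x = x - ⟪x, coroot α⟫ • α })
    (w : E ≃ₗᵢ[ℝ] E) (hw : w ∈ W)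
    (lam : E) (hlam : lam ∈ Submodule.span ℝ (Φ : Set E))
    (hspecial : ∀ i, ∃ z : ℤ, ⟪lam, coroot (a i)⟫ = (M (a i) : ℝ) * (z : ℝ)) :
    w lam ∈ Submodule.span ℝ (Φ : Set E) ∧
    ∀ i, ∃ z : ℤ, ⟪w lam, coroot (a i)⟫ = (M (a i) : ℝ) * (z : ℝ) := by
  classical
  -- basic facts
  have hpos : ∀ α ∈ Φ, 0 < ⟪α, α⟫ := by
    intro α hα
    obtain ⟨h1, h2⟩ := hd α hα
    rw [h2]
    have : (0 : ℝ) < (d α : ℝ) := by exact_mod_cast h1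
    linarith
  have hne : ∀ α ∈ Φ, ⟪α, α⟫ ≠ 0 := fun α hα => ne_of_gt (hpos α hα)
  have hcor : ∀ α ∈ Φ, ∀ x : E, ⟪x, coroot α⟫ = 2 / ⟪α, α⟫ * ⟪x, α⟫ := by
    intro α hα x
    rw [hco α hα, real_inner_smul_right]
  have hmy : ∀ α ∈ Φ, ∀ x : E, x - ⟪x, coroot α⟫ • α = myrefl α x := by
    intro α hα x
    rw [hcor α hα]
    rfl
  set Lp : E → Prop := fun x => x ∈ Submodule.span ℝ (Φ : Set E) ∧
    ∀ i, ∃ z : ℤ, ⟪x, coroot (a i)⟫ = (M (a i) : ℝ) * (z : ℝ) with hLpdef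
  -- simple reflections preserve `Lp`
  have hsimple : ∀ (i : Fin r) (x : E), Lp x → Lp (myrefl (a i) x) := by
    intro i x hx
    constructor
    · rw [← hmy (a i) (haΦ i)]
      exact Submodule.sub_mem _ hx.1
        (Submodule.smul_mem _ _ (Submodule.subset_span (by simpa using haΦ i)))
    · intro j
      obtain ⟨zj, hzj⟩ := hx.2 j
      obtain ⟨zi, hzi⟩ := hx.2 i
      obtain ⟨kij, hkij⟩ := hcrys (a j) (haΦ j) (a i) (haΦ i)
      obtain ⟨kji, hkji⟩ := hcrys (a i) (haΦ i) (a j) (haΦ j)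
      have hrel : kij * (2 * (d (a j) : ℤ)) = kji * (2 * (d (a i) : ℤ)) := by
        have e1 : (kij : ℝ) * (2 * (d (a j) : ℝ)) = 2 * ⟪a i, a j⟫ := by
          rw [← (hd (a j) (haΦ j)).2, ← hkij, hcor (a j) (haΦ j)]
          field_simp
          rw [mul_div_cancel_left₀ _ (hne (a j) (haΦ j))]
        have e2 : (kji : ℝ) * (2 * (d (a i) : ℝ)) = 2 * ⟪a j, a i⟫ := by
          rw [← (hd (a i) (haΦ i)).2, ← hkji, hcor (a i) (haΦ i)]
          field_simp
          rw [mul_div_cancel_left₀ _ (hne (a i) (haΦ i))]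
        have : (kij : ℝ) * (2 * (d (a j) : ℝ)) = (kji : ℝ) * (2 * (d (a i) : ℝ)) := by
          rw [e1, e2, real_inner_comm]
        exact_mod_cast this
      have hdvd := myMdvd m (d (a i)) (d (a j)) hm kij kji hrel (hd (a j) (haΦ j)).1
      rw [← hMdef (a i), ← hMdef (a j)] at hdvd
      obtain ⟨t, ht⟩ := hdvd
      refine ⟨zj - zi * t, ?_⟩
      rw [← hmy (a i) (haΦ i), inner_sub_left, real_inner_smul_left, hzj, hzi, hkij]
      have htR : ((M (a i) : ℤ) : ℝ) * (kij : ℝ) = ((M (a j) : ℤ) : ℝ) * (t : ℝ) := by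
        exact_mod_cast congrArg (fun z : ℤ => (z : ℝ)) ht
      push_cast at htR ⊢
      linear_combination (-(zi : ℝ)) * htR
  -- main induction: reflections in arbitrary nonnegative roots preserve `Lp`
  have key : ∀ n : ℕ, ∀ β ∈ Φ, ∀ c : Fin r → ℤ, β = ∑ i, (c i : ℝ) • a i →
      (∀ i, 0 ≤ c i) → (∑ i, c i) ≤ (n : ℤ) → ∀ x, Lp x → Lp (myrefl β x) := by
    intro n
    induction n with
    | zero =>
      intro β hβ c hrep hc0 hsum x hx
      exfalso
      have hz : ∀ i ∈ Finset.univ, c i = 0 := by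
        have := (Finset.sum_eq_zero_iff_of_nonneg (fun i _ => hc0 i)).mp
          (le_antisymm (by exact_mod_cast hsum) (Finset.sum_nonneg fun i _ => hc0 i))
        exact this
      apply hΦ0
      have : β = 0 := by
        rw [hrep]
        apply Finset.sum_eq_zero
        intro i hi
        rw [hz i hi]
        simp
      rwa [this] at hβ
    | succ n ih =>
      intro β hβ c hrep hc0 hsum x hx
      by_cases hA : ∃ i, ∀ j, j ≠ i → c j = 0
      · -- β is a multiple of a simple root
        obtain ⟨i, hi⟩ := hA
        have hβi : β = (c i : ℝ) • a i := by
          rw [hrep, Finset.sum_eq_single i]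
          · intro j _ hj
            rw [hi j hj]; simp
          · intro h; exact absurd (Finset.mem_univ i) h
        have hci : (c i : ℝ) ≠ 0 := by
          intro h
          apply hΦ0
          have : β = 0 := by rw [hβi, h, zero_smul]
          rwa [this] at hβ
        have heq : myrefl β x = myrefl (a i) x := by
          unfold myrefl
          rw [hβi]
          simp only [real_inner_smul_left, real_inner_smul_right, smul_smul]
          congr 1
          have hai := hne (a i) (haΦ i)
          congr 1
          field_simp
        rw [heq]
        exact hsimple i x hx
      · -- β has at least two nonzero coefficients
        push_neg at hA
        have hββ : 0 < ⟪β, β⟫ := hpos β hβ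
        have hsum' : ⟪β, β⟫ = ∑ j, (c j : ℝ) * ⟪β, a j⟫ := by
          conv_lhs => rw [show (⟪β, β⟫ : ℝ) = ⟪β, ∑ i, (c i : ℝ) • a i⟫ by rw [← hrep]]
          rw [inner_sum]
          exact Finset.sum_congr rfl fun j _ => real_inner_smul_right _ _ _
        have hex : ∃ i, 0 < c i ∧ 0 < ⟪β, a i⟫ := by
          by_contra hno
          push_neg at hno
          have hnp : ∀ j ∈ Finset.univ, (c j : ℝ) * ⟪β, a j⟫ ≤ 0 := by
            intro j _
            rcases lt_or_ge 0 (c j) with h | h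
            · have h2 := hno j h
              have h3 : (0 : ℝ) ≤ (c j : ℝ) := by exact_mod_cast hc0 j
              exact mul_nonpos_of_nonneg_of_nonpos h3 h2
            · have : c j = 0 := le_antisymm h (hc0 j)
              simp [this]
          have := Finset.sum_nonpos hnp
          rw [← hsum'] at this
          linarith
        obtain ⟨i, hci, hβai⟩ := hex
        obtain ⟨k, hk⟩ := hcrys (a i) (haΦ i) β hβ
        have hkpos : 0 < k := by
          have : (0 : ℝ) < (k : ℝ) := by
            rw [← hk, hcor (a i) (haΦ i)]
            have := hpos (a i) (haΦ i)
            positivity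
          exact_mod_cast this
        set β' := β - (k : ℝ) • a i with hβ'def
        have hβ'Φ : β' ∈ Φ := by
          have := hrefl (a i) (haΦ i) β hβ
          rwa [hk] at this
        set c₂ : Fin r → ℤ := fun j => if j = i then c i - k else c j with hc₂
        have hrep2 : β' = ∑ j, (c₂ j : ℝ) • a j := by
          have hterm : ∀ j : Fin r,
              (c₂ j : ℝ) • a j = (c j : ℝ) • a j - (if j = i then (k : ℝ) • a j else 0) := by
            intro j
            by_cases h : j = i
            · simp only [hc₂, h, if_pos rfl]
              push_cast
              rw [sub_smul]
            · simp [hc₂, h]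
          rw [hβ'def, hrep]
          rw [Finset.sum_congr rfl fun j _ => hterm j, Finset.sum_sub_distrib,
            Finset.sum_ite_eq' Finset.univ i (fun j => (k : ℝ) • a j)]
          simp
        obtain ⟨c', hc'rep, hc'sign⟩ := hbase β' hβ'Φ
        have hceq : ∀ j, c' j = c₂ j := by
          have h0 : ∑ j, ((c' j : ℝ) - (c₂ j : ℝ)) • a j = 0 := by
            have : ∑ j, ((c' j : ℝ) - (c₂ j : ℝ)) • a j
                = (∑ j, (c' j : ℝ) • a j) - ∑ j, (c₂ j : ℝ) • a j := by
              rw [← Finset.sum_sub_distrib]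
              exact Finset.sum_congr rfl fun j _ => sub_smul _ _ _
            rw [this, ← hc'rep, ← hrep2, sub_self]
          have hcoef := Fintype.linearIndependent_iff.mp hind
            (fun j => (c' j : ℝ) - (c₂ j : ℝ)) h0
          intro j
          have := hcoef j
          have heq : (c' j : ℝ) = (c₂ j : ℝ) := by linarith [sub_eq_zero.mp this]
          exact_mod_cast heq
        have hc₂0 : ∀ j, 0 ≤ c₂ j := by
          rcases hc'sign with h | h
          · intro j
            rw [← hceq j]
            exact h j
          · exfalso
            obtain ⟨j₀, hj₀ne, hj₀⟩ := hA i
            have h1 : 0 < c j₀ := lt_of_le_of_ne (hc0 j₀) (Ne.symm hj₀)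
            have h2 : c₂ j₀ = c j₀ := by simp [hc₂, hj₀ne]
            have h3 := h j₀
            rw [hceq j₀, h2] at h3
            omega
        have hsum2 : (∑ j, c₂ j) ≤ (n : ℤ) := by
          have hs : ∑ j, c₂ j = (∑ j, c j) - k := by
            have hterm : ∀ j : Fin r, c₂ j = c j - (if j = i then k else 0) := by
              intro j
              by_cases h : j = i <;> simp [hc₂, h]
            rw [Finset.sum_congr rfl fun j _ => hterm j, Finset.sum_sub_distrib,
              Finset.sum_ite_eq' Finset.univ i (fun _ => k)]
            simp
          rw [hs]
          push_cast at hsum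
          omega
        have hstep := ih β' hβ'Φ c₂ hrep2 hc₂0 hsum2 (myrefl (a i) x) (hsimple i x hx)
        have hfinal := hsimple i _ hstep
        have hconj : myrefl (a i) (myrefl β' (myrefl (a i) x)) = myrefl β x := by
          rw [myrefl_conj (a i) β' (hne (a i) (haΦ i)) x]
          congr 1
          have h2 : ⟪a i, coroot (a i)⟫ = 2 := by
            rw [hcor (a i) (haΦ i)]
            exact div_mul_cancel₀ 2 (hne (a i) (haΦ i))
          have h1 : ⟪β', coroot (a i)⟫ = -(k : ℝ) := by
            rw [hβ'def, inner_sub_left, real_inner_smul_left, hk, h2]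
            ring
          rw [← hmy (a i) (haΦ i) β', h1, hβ'def]
          module
        rwa [hconj] at hfinal
  -- reflections in arbitrary roots preserve `Lp`
  have hgen : ∀ β ∈ Φ, ∀ x, Lp x → Lp (myrefl β x) := by
    intro β hβ x hx
    obtain ⟨c, hrep, hsign⟩ := hbase β hβ
    rcases hsign with h | h
    · exact key (∑ j, c j).toNat β hβ c hrep h (Int.self_le_toNat _) x hx
    · have h2 : ⟪β, coroot β⟫ = 2 := by
        rw [hcor β hβ]
        field_simp [hne β hβ]
        exact div_self (hne β hβ)
      have hnegmem : -β ∈ Φ := by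
        have h3 := hrefl β hβ β hβ
        rw [h2] at h3
        have h4 : β - (2 : ℝ) • β = -β := by module
        rwa [h4] at h3
      have hflip : myrefl (-β) x = myrefl β x := by
        unfold myrefl
        rw [inner_neg_neg, inner_neg_right]
        simp [smul_neg, neg_smul, mul_neg]
      have hrepneg : -β = ∑ j, ((-c j : ℤ) : ℝ) • a j := by
        rw [hrep, ← Finset.sum_neg_distrib]
        apply Finset.sum_congr rfl
        intro j _
        push_cast
        rw [neg_smul]
      rw [← hflip]
      exact key (∑ j, (-c j)).toNat (-β) hnegmem (fun j => -c j) hrepneg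
        (fun j => neg_nonneg.mpr (h j)) (Int.self_le_toNat _) x hx
  -- the subgroup of isometries preserving `Lp`
  let H : Subgroup (E ≃ₗᵢ[ℝ] E) :=
  { carrier := {g | (∀ x, Lp x → Lp (g x)) ∧ (∀ x, Lp x → Lp (g⁻¹ x))}
    one_mem' := by
      constructor <;> intro x hx <;> simpa using hx
    mul_mem' := by
      rintro g h ⟨hg1, hg2⟩ ⟨hh1, hh2⟩
      constructor
      · intro x hx
        rw [LinearIsometryEquiv.coe_mul]
        exact hg1 _ (hh1 _ hx)
      · intro x hx
        rw [mul_inv_rev, LinearIsometryEquiv.coe_mul]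
        exact hh2 _ (hg2 _ hx)
    inv_mem' := by
      rintro g ⟨hg1, hg2⟩
      refine ⟨hg2, ?_⟩
      intro x hx
      rw [inv_inv]
      exact hg1 x hx }
  have hgens : { w : E ≃ₗᵢ[ℝ] E | ∃ α ∈ Φ, ∀ x, w x = x - ⟪x, coroot α⟫ • α } ⊆ H := by
    rintro g ⟨α, hα, hg⟩
    have hgm : ∀ y, g y = myrefl α y := by
      intro y
      rw [hg y, hmy α hα]
    have hginv : ∀ y, g⁻¹ y = g y := by
      intro y
      have hgg : g (g y) = y := by
        rw [hgm (g y), hgm y, myrefl_invol]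
      conv_lhs => rw [← hgg]
      rw [LinearIsometryEquiv.coe_inv]
      exact g.symm_apply_apply _
    constructor
    · intro x hx
      rw [hgm x]
      exact hgen α hα x hx
    · intro x hx
      rw [hginv x, hgm x]
      exact hgen α hα x hx
  have hWH : W ≤ H := by
    rw [hW]
    exact (Subgroup.closure_le H).mpr hgens
  have hwH := hWH hw
  have hres : Lp (w lam) := hwH.1 lam ⟨hlam, hspecial⟩
  exact hres
end

section
/- Let M ≥ 1 and let q ∈ ℂ^× be such that q² is a primitive M-th root of unity. Then for every a ∈ ℤ, c ∈ ℕ, and natural numbers b, d with 0 ≤ b ≤ M−1 and 0 ≤ d ≤ M−1, the following identity holds in ℂ: [aM+b choose cM+d]_q = q^{M²·c·(a+1) + M·(a·d − b·c)} · [b choose d]_q · C(a, c). -/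
/-- The balanced Gaussian binomial coefficient `[n choose k]_v`, defined as the Laurent
polynomial (= rational function with only a power of `v` in the denominator)
`∏_{s=1}^{k} (v^{n−s+1} − v^{−(n−s+1)})/(v^s − v^{−s})`, evaluated at `v = q ∈ ℂ`. -/
noncomputable def qbinom (q : ℂ) (n : ℤ) (k : ℕ) : ℂ :=
  RatFunc.eval (algebraMap ℚ ℂ) q
    (∏ s ∈ Finset.range k,
      ((RatFunc.X : RatFunc ℚ) ^ (n - (s : ℤ)) - (RatFunc.X : RatFunc ℚ) ^ (-(n - (s : ℤ)))) /
      ((RatFunc.X : RatFunc ℚ) ^ ((s : ℤ) + 1) - (RatFunc.X : RatFunc ℚ) ^ (-((s : ℤ) + 1))))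

/-- The generalized ordinary binomial coefficient `C(a, c) = a(a−1)⋯(a−c+1)/c!` for
`a ∈ ℤ`, `c ∈ ℕ`, as a complex number. -/
noncomputable def genBinom (a : ℤ) (c : ℕ) : ℂ :=
  (∏ i ∈ Finset.range c, ((a : ℂ) - (i : ℂ))) / (Nat.factorial c : ℂ)


open Polynomial Finset

namespace QL

abbrev K := RatFunc ℚ

noncomputable def Xz (t : ℤ) : K := (RatFunc.X : K) ^ t

lemma hX0 : (RatFunc.X : K) ≠ 0 := RatFunc.X_ne_zero

lemma Xz_add (s t : ℤ) : Xz (s + t) = Xz s * Xz t := zpow_add₀ hX0 s t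

lemma Xz_ne_zero (t : ℤ) : Xz t ≠ 0 := zpow_ne_zero t hX0

/-- numerator product -/
noncomputable def Nn (n : ℤ) (k : ℕ) : K :=
  ∏ s ∈ range k, (Xz (n - s) - Xz (-(n - s)))

/-- denominator product -/
noncomputable def Dd (k : ℕ) : K := ∏ s ∈ range k, (Xz ((s : ℤ) + 1) - Xz (-((s : ℤ) + 1)))

/-- the Gaussian binomial as rational function -/
noncomputable def F (n : ℤ) (k : ℕ) : K :=
  ∏ s ∈ Finset.range k,
      ((RatFunc.X : RatFunc ℚ) ^ (n - (s : ℤ)) - (RatFunc.X : RatFunc ℚ) ^ (-(n - (s : ℤ)))) /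
      ((RatFunc.X : RatFunc ℚ) ^ ((s : ℤ) + 1) - (RatFunc.X : RatFunc ℚ) ^ (-((s : ℤ) + 1)))

lemma qbinom_eq (q : ℂ) (n : ℤ) (k : ℕ) :
    qbinom q n k = RatFunc.eval (algebraMap ℚ ℂ) q (F n k) := rfl

lemma F_eq (n : ℤ) (k : ℕ) : F n k = Nn n k / Dd k := by
  rw [F, Nn, Dd, ← prod_div_distrib]
  rfl

lemma diff_ne_zero {t : ℤ} (ht : 0 < t) : Xz t - Xz (-t) ≠ 0 := by
  intro h
  have h2 : Xz t = Xz (-t) := by linear_combination h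
  have h3 : Xz (2 * t) = 1 := by
    rw [two_mul, Xz_add]
    nth_rewrite 2 [h2]
    rw [← Xz_add, add_neg_cancel]
    exact zpow_zero _
  have h4 : ((RatFunc.X : K)) ^ ((2 * t).toNat) = 1 := by
    rw [← zpow_natCast, Int.toNat_of_nonneg (by omega)]; exact h3
  have h5 : (Polynomial.X : ℚ[X]) ^ ((2 * t).toNat) = 1 := by
    apply RatFunc.algebraMap_injective ℚ
    simpa [map_pow] using h4
  have := congrArg Polynomial.natDegree h5
  rw [natDegree_X_pow, natDegree_one] at this
  omega

lemma Dd_ne_zero (k : ℕ) : Dd k ≠ 0 := by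
  rw [Dd]
  apply prod_ne_zero_iff.2
  intro s _
  exact diff_ne_zero (by positivity)

lemma Nn_succ (n : ℤ) (k : ℕ) : Nn n (k + 1) = Nn n k * (Xz (n - k) - Xz (-(n - k))) :=
  prod_range_succ _ _

lemma Nn_succ' (n : ℤ) (k : ℕ) :
    Nn (n + 1) (k + 1) = Nn n k * (Xz (n + 1) - Xz (-(n + 1))) := by
  rw [Nn, prod_range_succ']
  congr 1
  · apply prod_congr rfl
    intro s _
    push_cast
    ring_nf
  · push_cast; ring_nf

lemma Dd_succ (k : ℕ) : Dd (k + 1) = Dd k * (Xz ((k : ℤ) + 1) - Xz (-((k : ℤ) + 1))) :=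
  prod_range_succ _ _

end QL
namespace QL

lemma F_zero_right (n : ℤ) : F n 0 = 1 := by simp [F]

private lemma aux1 (a b c d : K) (hc : c ≠ 0) (hd : d ≠ 0) :
    (a * b) / (c * d) * d = c⁻¹ * a * b := by
  field_simp

lemma F_step (n : ℤ) (k : ℕ) :
    F n (k + 1) * (Xz ((k : ℤ) + 1) - Xz (-((k : ℤ) + 1))) =
      F n k * (Xz (n - k) - Xz (-(n - k))) := by
  rw [F_eq, F_eq, Nn_succ, Dd_succ,
    aux1 _ _ _ _ (Dd_ne_zero k) (diff_ne_zero (t := (k : ℤ) + 1) (by positivity))]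
  rw [div_eq_inv_mul, mul_assoc]

private lemma aux2 (N D d num f0 x y : K) (hD : D ≠ 0) (hd : d ≠ 0)
    (key : f0 = x * num + y * d) :
    (N * f0) / (D * d) = x * ((N * num) / (D * d)) + y * (N / D) := by
  subst key
  field_simp

lemma F_pascal (n : ℤ) (k : ℕ) :
    F (n + 1) (k + 1) = Xz ((k : ℤ) + 1) * F n (k + 1) + Xz ((k : ℤ) - n) * F n k := by
  have key : Xz (n + 1) - Xz (-(n + 1)) =
      Xz ((k : ℤ) + 1) * (Xz (n - k) - Xz (-(n - k))) +
        Xz ((k : ℤ) - n) * (Xz ((k : ℤ) + 1) - Xz (-((k : ℤ) + 1))) := by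
    simp only [mul_sub, ← Xz_add]
    ring_nf
  rw [F_eq, F_eq, F_eq, Nn_succ', Nn_succ, Dd_succ]
  exact aux2 _ _ _ _ _ _ _ (Dd_ne_zero k) (diff_ne_zero (by positivity)) key

lemma F_pascal' (n : ℤ) (k : ℕ) :
    F (n + 1) (k + 1) = Xz (-((k : ℤ) + 1)) * F n (k + 1) + Xz (n - k) * F n k := by
  have key : Xz (n + 1) - Xz (-(n + 1)) =
      Xz (-((k : ℤ) + 1)) * (Xz (n - k) - Xz (-(n - k))) +
        Xz (n - k) * (Xz ((k : ℤ) + 1) - Xz (-((k : ℤ) + 1))) := by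
    simp only [mul_sub, ← Xz_add]
    ring_nf
  rw [F_eq, F_eq, F_eq, Nn_succ', Nn_succ, Dd_succ]
  exact aux2 _ _ _ _ _ _ _ (Dd_ne_zero k) (diff_ne_zero (by positivity)) key

lemma F_eq_zero {n k : ℕ} (h : n < k) : F (n : ℤ) k = 0 := by
  rw [F_eq, Nn]
  rw [Finset.prod_eq_zero (Finset.mem_range.2 h)]
  · simp
  · simp [Xz]

lemma F_diag (n : ℕ) : F (n : ℤ) n = 1 := by
  rw [F_eq]
  have : Nn (n : ℤ) n = Dd n := by
    rw [Nn, Dd, ← Finset.prod_range_reflect]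
    apply Finset.prod_congr rfl
    intro s hs
    have hs' : s < n := Finset.mem_range.1 hs
    have h1 : ((n : ℤ)) - ((n - 1 - s : ℕ) : ℤ) = (s : ℤ) + 1 := by omega
    rw [h1]
  rw [this, div_self (Dd_ne_zero n)]

lemma F_reflect (n : ℤ) (k : ℕ) : F n k = (-1) ^ k * F ((k : ℤ) - n - 1) k := by
  rw [F_eq, F_eq]
  have h : Nn ((k : ℤ) - n - 1) k = (-1) ^ k * Nn n k := by
    rw [Nn, Nn, ← Finset.prod_range_reflect]
    have : ∀ s ∈ Finset.range k,
        (Xz (((k : ℤ) - n - 1) - ((k - 1 - s : ℕ) : ℤ)) -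
          Xz (-(((k : ℤ) - n - 1) - ((k - 1 - s : ℕ) : ℤ)))) =
        (-1) * (Xz (n - s) - Xz (-(n - s))) := by
      intro s hs
      have hs' : s < k := Finset.mem_range.1 hs
      have h1 : ((k - 1 - s : ℕ) : ℤ) = (k : ℤ) - 1 - s := by omega
      rw [h1]
      have h2 : (k : ℤ) - n - 1 - ((k : ℤ) - 1 - s) = -(n - s) := by ring
      rw [h2, neg_neg]
      ring
    rw [Finset.prod_congr rfl this, Finset.prod_mul_distrib]
    simp
  rw [h, ← mul_div_assoc, ← mul_assoc, ← pow_add]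
  have h2 : ((-1 : K)) ^ (k + k) = 1 := Even.neg_one_pow ⟨k, rfl⟩
  rw [h2, one_mul]

end QL
namespace QL

open RatFunc in
/-- `r` is a Laurent polynomial whose evaluation at `q` is `z`. -/
def Ev (q : ℂ) (r : K) (z : ℂ) : Prop :=
  ∃ (p : Polynomial ℚ) (m : ℕ), algebraMap (Polynomial ℚ) K p = (RatFunc.X : K) ^ m * r ∧
    Polynomial.eval₂ (algebraMap ℚ ℂ) q p = q ^ m * z

variable {q : ℂ}

lemma Ev.eval (hq : q ≠ 0) {r : K} {z : ℂ} (h : Ev q r z) :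
    RatFunc.eval (algebraMap ℚ ℂ) q r = z := by
  obtain ⟨p, m, h1, h2⟩ := h
  have hXm : algebraMap (Polynomial ℚ) K (Polynomial.X ^ m) = (RatFunc.X : K) ^ m := by
    rw [map_pow, RatFunc.algebraMap_X]
  have hXmne : (Polynomial.X : Polynomial ℚ) ^ m ≠ 0 := pow_ne_zero _ Polynomial.X_ne_zero
  have hXne : ((RatFunc.X : K)) ^ m ≠ 0 := pow_ne_zero _ RatFunc.X_ne_zero
  have hXmK : algebraMap (Polynomial ℚ) K (Polynomial.X ^ m) ≠ 0 := by
    rw [hXm]; exact hXne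
  have hr : r = algebraMap (Polynomial ℚ) K p / algebraMap (Polynomial ℚ) K (Polynomial.X ^ m) := by
    rw [hXm, h1, mul_comm, mul_div_assoc, div_self hXne, mul_one]
  have hdvd : r.denom ∣ Polynomial.X ^ m := by
    rw [hr]; exact RatFunc.denom_div_dvd p (Polynomial.X ^ m)
  have hden : Polynomial.eval₂ (algebraMap ℚ ℂ) q r.denom ≠ 0 := by
    obtain ⟨t, ht⟩ := hdvd
    intro h0
    have : Polynomial.eval₂ (algebraMap ℚ ℂ) q ((Polynomial.X : Polynomial ℚ) ^ m) = 0 := by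
      rw [ht, Polynomial.eval₂_mul, h0, zero_mul]
    rw [Polynomial.eval₂_X_pow] at this
    exact pow_ne_zero m hq this
  have hone : Polynomial.eval₂ (algebraMap ℚ ℂ) q
      (RatFunc.denom (algebraMap (Polynomial ℚ) K (Polynomial.X ^ m))) ≠ 0 := by
    rw [RatFunc.denom_algebraMap]
    simp
  have hmul := RatFunc.eval_mul (f := algebraMap ℚ ℂ) (a := q) hone hden
  have harg : algebraMap (Polynomial ℚ) K (Polynomial.X ^ m) * r = algebraMap (Polynomial ℚ) K p := by
    rw [hXm, h1]
  rw [harg] at hmul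
  have e1 : RatFunc.eval (algebraMap ℚ ℂ) q (algebraMap (Polynomial ℚ) K p) =
      Polynomial.eval₂ (algebraMap ℚ ℂ) q p := by
    rw [RatFunc.eval_algebraMap]
    simp
  have e2 : RatFunc.eval (algebraMap ℚ ℂ) q (algebraMap (Polynomial ℚ) K (Polynomial.X ^ m)) =
      q ^ m := by
    rw [RatFunc.eval_algebraMap]
    simp
  rw [e1, e2, h2] at hmul
  exact (mul_left_cancel₀ (pow_ne_zero m hq) hmul).symm

lemma Ev.unique (hq : q ≠ 0) {r r' : K} {z z' : ℂ} (h : Ev q r z) (h' : Ev q r' z')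
    (hrr : r = r') : z = z' := by
  rw [← h.eval hq, hrr, h'.eval hq]

lemma Ev_one : Ev q 1 1 := ⟨1, 0, by simp, by simp⟩

lemma Ev_zero : Ev q 0 0 := ⟨0, 0, by simp, by simp⟩

lemma Ev_mul {r r' z z'} (h : Ev q r z) (h' : Ev q r' z') : Ev q (r * r') (z * z') := by
  obtain ⟨p, m, h1, h2⟩ := h
  obtain ⟨p', m', h1', h2'⟩ := h'
  exact ⟨p * p', m + m', by rw [map_mul, h1, h1']; ring,
    by rw [Polynomial.eval₂_mul, h2, h2']; ring⟩

lemma Ev_neg {r z} (h : Ev q r z) : Ev q (-r) (-z) := by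
  obtain ⟨p, m, h1, h2⟩ := h
  exact ⟨-p, m, by rw [map_neg, h1]; ring, by rw [Polynomial.eval₂_neg, h2]; ring⟩

lemma Ev_add {r r' z z'} (h : Ev q r z) (h' : Ev q r' z') : Ev q (r + r') (z + z') := by
  obtain ⟨p, m, h1, h2⟩ := h
  obtain ⟨p', m', h1', h2'⟩ := h'
  refine ⟨p * Polynomial.X ^ m' + p' * Polynomial.X ^ m, m + m', ?_, ?_⟩
  · rw [map_add, map_mul, map_mul, map_pow, map_pow, RatFunc.algebraMap_X, h1, h1']; ring
  · rw [Polynomial.eval₂_add, Polynomial.eval₂_mul, Polynomial.eval₂_mul,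
      Polynomial.eval₂_X_pow, Polynomial.eval₂_X_pow, h2, h2']; ring

lemma Ev_sub {r r' z z'} (h : Ev q r z) (h' : Ev q r' z') : Ev q (r - r') (z - z') := by
  simpa [sub_eq_add_neg] using Ev_add h (Ev_neg h')

lemma Ev_zpow (hq : q ≠ 0) (t : ℤ) : Ev q (Xz t) (q ^ t) := by
  have h2 : (((t + t.natAbs).toNat : ℤ)) = (t.natAbs : ℤ) + t := by omega
  refine ⟨Polynomial.X ^ (t + t.natAbs).toNat, t.natAbs, ?_, ?_⟩
  · rw [map_pow, RatFunc.algebraMap_X, ← zpow_natCast (RatFunc.X : K) ((t + t.natAbs).toNat),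
      h2, zpow_add₀ hX0, zpow_natCast]
    rfl
  · rw [Polynomial.eval₂_X_pow, ← zpow_natCast q ((t + t.natAbs).toNat),
      h2, zpow_add₀ hq, zpow_natCast]

lemma Ev_neg_one_pow (k : ℕ) : Ev q ((-1 : K) ^ k) ((-1 : ℂ) ^ k) :=
  ⟨(-1) ^ k, 0, by simp, by simp⟩

end QL
namespace QL

variable {q : ℂ}

lemma F_laurent (hq : q ≠ 0) (n : ℤ) (k : ℕ) : ∃ z, Ev q (F n k) z := by
  have claim : ∀ (n k : ℕ), ∃ z, Ev q (F (n : ℤ) k) z := by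
    intro n
    induction n with
    | zero =>
      intro k
      cases k with
      | zero => exact ⟨1, by rw [F_zero_right]; exact Ev_one⟩
      | succ k => exact ⟨0, by rw [F_eq_zero (Nat.succ_pos k)]; exact Ev_zero⟩
    | succ n ih =>
      intro k
      cases k with
      | zero => exact ⟨1, by rw [F_zero_right]; exact Ev_one⟩
      | succ k =>
        obtain ⟨z1, h1⟩ := ih (k + 1)
        obtain ⟨z2, h2⟩ := ih k
        refine ⟨q ^ ((k : ℤ) + 1) * z1 + q ^ ((k : ℤ) - n) * z2, ?_⟩
        have hc : ((n + 1 : ℕ) : ℤ) = (n : ℤ) + 1 := by push_cast; ring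
        rw [hc, F_pascal]
        exact Ev_add (Ev_mul (Ev_zpow hq _) h1) (Ev_mul (Ev_zpow hq _) h2)
  rcases le_or_gt 0 n with hn | hn
  · obtain ⟨m, rfl⟩ : ∃ m : ℕ, n = (m : ℤ) := ⟨n.toNat, (Int.toNat_of_nonneg hn).symm⟩
    exact claim m k
  · obtain ⟨z, hz⟩ := claim ((k : ℤ) - n - 1).toNat k
    refine ⟨(-1) ^ k * z, ?_⟩
    rw [F_reflect n k]
    have : (((((k : ℤ) - n - 1).toNat : ℕ)) : ℤ) = (k : ℤ) - n - 1 := by omega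
    rw [← this]
    exact Ev_mul (Ev_neg_one_pow k) hz

lemma Ev_qbinom (hq : q ≠ 0) (n : ℤ) (k : ℕ) : Ev q (F n k) (qbinom q n k) := by
  obtain ⟨z, hz⟩ := F_laurent hq n k
  have := hz.eval hq
  rw [qbinom_eq, this]
  exact hz

lemma qbinom_zero (n : ℤ) : qbinom q n 0 = 1 := by
  rw [qbinom_eq, F_zero_right, RatFunc.eval_one]

lemma qbinom_step (hq : q ≠ 0) (n : ℤ) (k : ℕ) :
    (q ^ ((k : ℤ) + 1) - q ^ (-((k : ℤ) + 1))) * qbinom q n (k + 1) =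
      (q ^ (n - k) - q ^ (-(n - k))) * qbinom q n k := by
  refine Ev.unique hq
    (Ev_mul (Ev_sub (Ev_zpow hq _) (Ev_zpow hq _)) (Ev_qbinom hq n (k + 1)))
    (Ev_mul (Ev_sub (Ev_zpow hq _) (Ev_zpow hq _)) (Ev_qbinom hq n k)) ?_
  rw [mul_comm, mul_comm (Xz (n - ↑k) - Xz (-(n - ↑k)))]
  exact F_step n k

lemma qbinom_pascal (hq : q ≠ 0) (n : ℤ) (k : ℕ) :
    qbinom q (n + 1) (k + 1) =
      q ^ ((k : ℤ) + 1) * qbinom q n (k + 1) + q ^ ((k : ℤ) - n) * qbinom q n k :=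
  Ev.unique hq (Ev_qbinom hq (n + 1) (k + 1))
    (Ev_add (Ev_mul (Ev_zpow hq _) (Ev_qbinom hq n (k + 1)))
      (Ev_mul (Ev_zpow hq _) (Ev_qbinom hq n k))) (F_pascal n k)

lemma qbinom_pascal' (hq : q ≠ 0) (n : ℤ) (k : ℕ) :
    qbinom q (n + 1) (k + 1) =
      q ^ (-((k : ℤ) + 1)) * qbinom q n (k + 1) + q ^ (n - k) * qbinom q n k :=
  Ev.unique hq (Ev_qbinom hq (n + 1) (k + 1))
    (Ev_add (Ev_mul (Ev_zpow hq _) (Ev_qbinom hq n (k + 1)))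
      (Ev_mul (Ev_zpow hq _) (Ev_qbinom hq n k))) (F_pascal' n k)

lemma qbinom_eq_zero {n k : ℕ} (h : n < k) : qbinom q (n : ℤ) k = 0 := by
  rw [qbinom_eq, F_eq_zero h, RatFunc.eval_zero]

lemma qbinom_diag (n : ℕ) : qbinom q (n : ℤ) n = 1 := by
  rw [qbinom_eq, F_diag, RatFunc.eval_one]

lemma qbinom_reflect (hq : q ≠ 0) (n : ℤ) (k : ℕ) :
    qbinom q n k = (-1) ^ k * qbinom q ((k : ℤ) - n - 1) k :=
  Ev.unique hq (Ev_qbinom hq n k)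
    (Ev_mul (Ev_neg_one_pow k) (Ev_qbinom hq _ k)) (F_reflect n k)

end QL
namespace QL

/-- ℤ-indexed version of `qbinom`, zero for negative second argument. -/
noncomputable def gz (q : ℂ) (n : ℤ) (j : ℤ) : ℂ :=
  if 0 ≤ j then qbinom q n j.toNat else 0

variable {q : ℂ}

lemma gz_neg {j : ℤ} (h : j < 0) (n : ℤ) : gz q n j = 0 := if_neg (by omega)

lemma gz_natCast (n : ℤ) (k : ℕ) : gz q n (k : ℤ) = qbinom q n k := by
  rw [gz, if_pos (by positivity), Int.toNat_natCast]

lemma gz_zero (n : ℤ) : gz q n 0 = 1 := by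
  have : ((0 : ℕ) : ℤ) = 0 := rfl
  rw [← this, gz_natCast, qbinom_zero]

lemma gz_cast_succ (n : ℤ) (k : ℕ) : gz q n ((k : ℤ) + 1) = qbinom q n (k + 1) := by
  rw [show ((k : ℤ) + 1) = ((k + 1 : ℕ) : ℤ) by push_cast; ring, gz_natCast]

lemma gz_pascal (hq : q ≠ 0) (n j : ℤ) :
    gz q (n + 1) j = q ^ j * gz q n j + q ^ (j - 1 - n) * gz q n (j - 1) := by
  rcases lt_trichotomy j 0 with h | h | h
  · rw [gz_neg h, gz_neg h, gz_neg (by omega), mul_zero, mul_zero, add_zero]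
  · subst h
    rw [gz_zero, gz_zero, gz_neg (by omega), mul_zero, add_zero, zpow_zero, mul_one]
  · obtain ⟨k, rfl⟩ : ∃ k : ℕ, j = (k : ℤ) + 1 := ⟨(j - 1).toNat, by omega⟩
    have e2 : ((k : ℤ) + 1 - 1) = (k : ℤ) := by ring
    have e1 : ((k : ℤ) + 1 - 1 - n) = (k : ℤ) - n := by ring
    rw [e1, e2, gz_cast_succ, gz_cast_succ, gz_natCast]
    exact qbinom_pascal hq n k

lemma gz_pascal' (hq : q ≠ 0) (n j : ℤ) :
    gz q (n + 1) j = q ^ (-j) * gz q n j + q ^ (n + 1 - j) * gz q n (j - 1) := by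
  rcases lt_trichotomy j 0 with h | h | h
  · rw [gz_neg h, gz_neg h, gz_neg (by omega), mul_zero, mul_zero, add_zero]
  · subst h
    rw [gz_zero, gz_zero, gz_neg (by omega), mul_zero, add_zero, neg_zero, zpow_zero, mul_one]
  · obtain ⟨k, rfl⟩ : ∃ k : ℕ, j = (k : ℤ) + 1 := ⟨(j - 1).toNat, by omega⟩
    have e2 : ((k : ℤ) + 1 - 1) = (k : ℤ) := by ring
    have e1 : (n + 1 - ((k : ℤ) + 1)) = n - (k : ℤ) := by ring
    rw [e1, e2, gz_cast_succ, gz_cast_succ, gz_natCast]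
    exact qbinom_pascal' hq n k

lemma gz_step (hq : q ≠ 0) (n j : ℤ) :
    (q ^ j - q ^ (-j)) * gz q n j = (q ^ (n - j + 1) - q ^ (j - 1 - n)) * gz q n (j - 1) := by
  rcases lt_trichotomy j 0 with h | h | h
  · rw [gz_neg h, gz_neg (by omega), mul_zero, mul_zero]
  · subst h
    rw [gz_zero, gz_neg (by omega), mul_zero, mul_one, neg_zero, zpow_zero, sub_self]
  · obtain ⟨k, rfl⟩ : ∃ k : ℕ, j = (k : ℤ) + 1 := ⟨(j - 1).toNat, by omega⟩
    have e2 : ((k : ℤ) + 1 - 1) = (k : ℤ) := by ring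
    have e1 : (n - ((k : ℤ) + 1) + 1) = n - (k : ℤ) := by ring
    have e3 : ((k : ℤ) + 1 - 1 - n) = -(n - (k : ℤ)) := by ring
    rw [e1, e3, e2, gz_cast_succ, gz_natCast]
    exact qbinom_step hq n k

lemma gz_eq_zero {n j : ℤ} (hn : 0 ≤ n) (h : n < j) : gz q n j = 0 := by
  obtain ⟨m, rfl⟩ : ∃ m : ℕ, n = (m : ℤ) := ⟨n.toNat, by omega⟩
  obtain ⟨k, rfl⟩ : ∃ k : ℕ, j = (k : ℤ) := ⟨j.toNat, by omega⟩
  rw [gz_natCast]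
  exact qbinom_eq_zero (by exact_mod_cast h)

lemma gz_diag {n : ℤ} (hn : 0 ≤ n) : gz q n n = 1 := by
  obtain ⟨m, rfl⟩ : ∃ m : ℕ, n = (m : ℤ) := ⟨n.toNat, by omega⟩
  rw [gz_natCast]
  exact qbinom_diag m

lemma gz_reflect (hq : q ≠ 0) {j : ℤ} (hj : 0 ≤ j) (n : ℤ) :
    gz q n j = (-1) ^ j.toNat * gz q (j - n - 1) j := by
  obtain ⟨k, rfl⟩ : ∃ k : ℕ, j = (k : ℤ) := ⟨j.toNat, by omega⟩
  rw [gz_natCast, gz_natCast, Int.toNat_natCast]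
  exact qbinom_reflect hq n k

section Root

variable {M : ℕ} (hM : 1 ≤ M) (hq : q ≠ 0) (hprim : IsPrimitiveRoot (q ^ 2) M)

include hprim in
lemma q_zpow_one_iff (l : ℤ) : q ^ (2 * l) = 1 ↔ (M : ℤ) ∣ l := by
  rw [← hprim.zpow_eq_one_iff_dvd l, ← zpow_natCast q 2, ← zpow_mul]
  norm_num

include hprim hq in
lemma qcongr {s t : ℤ} (h : 2 * (M : ℤ) ∣ s - t) : q ^ s = q ^ t := by
  obtain ⟨d, hd⟩ := h
  have hs : s = t + 2 * ((M : ℤ) * d) := by linarith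
  rw [hs, zpow_add₀ hq, (q_zpow_one_iff hprim ((M : ℤ) * d)).2 ⟨d, rfl⟩, mul_one]

include hprim hq in
lemma diffq_ne_zero {t : ℤ} (h : ¬ (M : ℤ) ∣ t) : q ^ t - q ^ (-t) ≠ 0 := by
  intro h0
  have h1 : q ^ t = q ^ (-t) := by linear_combination h0
  have h2 : q ^ (2 * t) = 1 := by
    calc q ^ (2 * t) = q ^ (t + t) := by ring_nf
      _ = q ^ t * q ^ t := zpow_add₀ hq _ _
      _ = q ^ (-t) * q ^ t := by rw [← h1]
      _ = q ^ (-t + t) := (zpow_add₀ hq _ _).symm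
      _ = 1 := by rw [neg_add_cancel, zpow_zero]
  exact h ((q_zpow_one_iff hprim t).1 h2)

include hprim hq hM in
lemma q_M_sq : q ^ ((M : ℤ) * M - M) = (-1 : ℂ) ^ (M + 1) := by
  rcases Nat.even_or_odd M with hEven | hOdd
  · obtain ⟨r, hr⟩ := hEven
    have hr1 : 1 ≤ r := by omega
    have hqM : q ^ (M : ℤ) = -1 := by
      have hsq : (q ^ (M : ℤ)) * (q ^ (M : ℤ)) = 1 := by
        rw [← zpow_add₀ hq, show (M : ℤ) + M = 2 * M by ring]
        exact (q_zpow_one_iff hprim M).2 dvd_rfl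
      have := mul_self_eq_one_iff.1 hsq
      rcases this with h1 | h1
      · exfalso
        have hr2 : (q ^ 2) ^ r = 1 := by
          have e : ((q ^ 2) ^ r : ℂ) = q ^ ((M : ℤ)) := by
            rw [← pow_mul, ← zpow_natCast q (2 * r)]
            norm_num [show 2 * r = M by omega]
          rw [e, h1]
        exact hprim.pow_ne_one_of_pos_of_lt (by omega) (by omega) hr2
      · exact h1
    have e : q ^ ((M : ℤ) * M - M) = q ^ (M : ℤ) := by
      apply qcongr hq hprim
      exact ⟨(r : ℤ) - 1, by push_cast [hr]; ring⟩
    rw [e, hqM, Odd.neg_one_pow ⟨r, by omega⟩]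
  · obtain ⟨r, hr⟩ := hOdd
    have e : q ^ ((M : ℤ) * M - M) = q ^ (0 : ℤ) := by
      apply qcongr hq hprim
      exact ⟨(r : ℤ), by push_cast [hr]; ring⟩
    rw [e, zpow_zero, Even.neg_one_pow ⟨r + 1, by omega⟩]

end Root

end QL
namespace QL

variable {q : ℂ} {M : ℕ}

set_option maxHeartbeats 1000000 in
lemma Slemma (hM : 1 ≤ M) (hq : q ≠ 0) (hprim : IsPrimitiveRoot (q ^ 2) M) :
    ∀ (k : ℕ) (n : ℤ), gz q (n + M) (k : ℤ) =
      q ^ ((M : ℤ) * k) * gz q n (k : ℤ) +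
        q ^ ((M : ℤ) * ((k : ℤ) - M - n)) * gz q n ((k : ℤ) - M) := by
  intro k
  induction k using Nat.strong_induction_on with
  | _ k IH =>
  rcases Nat.eq_zero_or_pos k with rfl | hk
  · intro n
    have hneg : ((0 : ℕ) : ℤ) - (M : ℤ) < 0 := by
      have : (1 : ℤ) ≤ (M : ℤ) := by exact_mod_cast hM
      omega
    rw [Nat.cast_zero, gz_zero, gz_zero, gz_neg (by exact_mod_cast hneg)]
    norm_num
  have hc : ((k - 1 : ℕ) : ℤ) = (k : ℤ) - 1 := by omega
  by_cases hdvd : (M : ℤ) ∣ (k : ℤ)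
  · -- k is a positive multiple of M
    have hMk : (M : ℤ) ≤ (k : ℤ) := Int.le_of_dvd (by exact_mod_cast hk) hdvd
    have hMkn : M ≤ k := by exact_mod_cast hMk
    have hM1 : (1 : ℤ) ≤ (M : ℤ) := by exact_mod_cast hM
    -- base case n = -1
    have base : gz q (-1 + M) (k : ℤ) =
        q ^ ((M : ℤ) * k) * gz q (-1) (k : ℤ) +
          q ^ ((M : ℤ) * ((k : ℤ) - M - (-1))) * gz q (-1) ((k : ℤ) - M) := by
      have hlhs : gz q (-1 + M) (k : ℤ) = 0 := gz_eq_zero (by omega) (by omega)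
      have hg1 : gz q (-1) (k : ℤ) = (-1 : ℂ) ^ k := by
        rw [gz_reflect hq (by positivity) (-1), show (k : ℤ) - (-1) - 1 = (k : ℤ) by ring,
          gz_diag (by positivity), Int.toNat_natCast, mul_one]
      have hg2 : gz q (-1) ((k : ℤ) - M) = (-1 : ℂ) ^ (k - M) := by
        rw [gz_reflect hq (by omega) (-1), show (k : ℤ) - M - (-1) - 1 = (k : ℤ) - M by ring,
          gz_diag (by omega), mul_one, show ((k : ℤ) - M).toNat = k - M by omega]
      have hpow : q ^ ((M : ℤ) * k) =
          q ^ ((M : ℤ) * ((k : ℤ) - M - (-1))) * ((-1 : ℂ) ^ (M + 1)) := by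
        rw [← q_M_sq hM hq hprim, ← zpow_add₀ hq]
        congr 1
        ring
      have hsign : (-1 : ℂ) ^ (M + 1) * (-1 : ℂ) ^ k = -(-1 : ℂ) ^ (k - M) := by
        rw [← pow_add, show M + 1 + k = (k - M) + 1 + 2 * M by omega, pow_add, pow_add,
          Even.neg_one_pow (⟨M, by ring⟩ : Even (2 * M))]
        ring
      rw [hlhs, hg1, hg2]
      linear_combination (norm := ring_nf)
        (-((-1 : ℂ) ^ k)) * hpow - q ^ ((M : ℤ) * ((k : ℤ) - M - (-1))) * hsign
    -- upward step
    have up : ∀ n : ℤ, (-1) ≤ n →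
        (gz q (n + M) (k : ℤ) = q ^ ((M : ℤ) * k) * gz q n (k : ℤ) +
          q ^ ((M : ℤ) * ((k : ℤ) - M - n)) * gz q n ((k : ℤ) - M)) →
        gz q (n + 1 + M) (k : ℤ) = q ^ ((M : ℤ) * k) * gz q (n + 1) (k : ℤ) +
          q ^ ((M : ℤ) * ((k : ℤ) - M - (n + 1))) * gz q (n + 1) ((k : ℤ) - M) := by
      intro n _ Pn
      have Sk1 := IH (k - 1) (by omega) n
      rw [hc] at Sk1
      have pasA := gz_pascal hq (n + (M : ℤ)) (k : ℤ)
      have pasB := gz_pascal hq n (k : ℤ)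
      have pasC := gz_pascal hq n ((k : ℤ) - M)
      have c1 : q ^ ((k : ℤ) - 1 - (n + (M : ℤ))) * q ^ ((M : ℤ) * ((k : ℤ) - 1)) =
          q ^ ((M : ℤ) * k) * q ^ ((k : ℤ) - 1 - n) := by
        rw [← zpow_add₀ hq, ← zpow_add₀ hq]
        exact qcongr hq hprim ⟨-1, by ring⟩
      have c2 : q ^ ((k : ℤ)) * q ^ ((M : ℤ) * ((k : ℤ) - M - n)) =
          q ^ ((M : ℤ) * ((k : ℤ) - M - (n + 1))) * q ^ ((k : ℤ) - M) := by
        rw [← zpow_add₀ hq, ← zpow_add₀ hq]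
        exact qcongr hq hprim ⟨1, by ring⟩
      linear_combination (norm := ring_nf) pasA + q ^ ((k : ℤ)) * Pn +
        q ^ ((k : ℤ) - 1 - (n + (M : ℤ))) * Sk1 - q ^ ((M : ℤ) * k) * pasB -
        q ^ ((M : ℤ) * ((k : ℤ) - M - (n + 1))) * pasC +
        gz q n ((k : ℤ) - 1) * c1 + gz q n ((k : ℤ) - M) * c2
    -- downward step
    have down : ∀ n : ℤ, n ≤ (-1) →
        (gz q (n + M) (k : ℤ) = q ^ ((M : ℤ) * k) * gz q n (k : ℤ) +
          q ^ ((M : ℤ) * ((k : ℤ) - M - n)) * gz q n ((k : ℤ) - M)) →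
        gz q (n - 1 + M) (k : ℤ) = q ^ ((M : ℤ) * k) * gz q (n - 1) (k : ℤ) +
          q ^ ((M : ℤ) * ((k : ℤ) - M - (n - 1))) * gz q (n - 1) ((k : ℤ) - M) := by
      intro n _ Pn
      have Sk1 := IH (k - 1) (by omega) (n - 1)
      rw [hc] at Sk1
      have pasA := gz_pascal hq (n - 1 + (M : ℤ)) (k : ℤ)
      have pasB := gz_pascal hq (n - 1) (k : ℤ)
      have pasC := gz_pascal hq (n - 1) ((k : ℤ) - M)
      have c1 : q ^ ((M : ℤ) * k) * q ^ ((k : ℤ) - 1 - (n - 1)) =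
          q ^ ((k : ℤ) - 1 - (n - 1 + (M : ℤ))) * q ^ ((M : ℤ) * ((k : ℤ) - 1)) := by
        rw [← zpow_add₀ hq, ← zpow_add₀ hq]
        exact qcongr hq hprim ⟨1, by ring⟩
      have c2 : q ^ ((M : ℤ) * ((k : ℤ) - M - n)) * q ^ ((k : ℤ) - M) =
          q ^ ((k : ℤ)) * q ^ ((M : ℤ) * ((k : ℤ) - M - (n - 1))) := by
        rw [← zpow_add₀ hq, ← zpow_add₀ hq]
        exact qcongr hq hprim ⟨-1, by ring⟩
      have hqk : q ^ ((k : ℤ)) ≠ 0 := zpow_ne_zero _ hq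
      apply mul_left_cancel₀ hqk
      linear_combination (norm := ring_nf) (-1 : ℂ) * pasA + Pn -
        q ^ ((k : ℤ) - 1 - (n - 1 + (M : ℤ))) * Sk1 + q ^ ((M : ℤ) * k) * pasB +
        q ^ ((M : ℤ) * ((k : ℤ) - M - n)) * pasC +
        gz q (n - 1) ((k : ℤ) - 1) * c1 + gz q (n - 1) ((k : ℤ) - M) * c2
    intro n
    rcases le_or_gt (-1) n with hn | hn
    · exact Int.le_induction base up n hn
    · exact Int.le_induction_down base down n (by omega)
  · -- M does not divide k
    intro n
    have IH1 := IH (k - 1) (by omega) n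
    rw [hc] at IH1
    have h1 := gz_step hq (n + (M : ℤ)) (k : ℤ)
    have h2 := gz_step hq n (k : ℤ)
    have h3 := gz_step hq n ((k : ℤ) - M)
    have hD : q ^ ((k : ℤ)) - q ^ (-(k : ℤ)) ≠ 0 := diffq_ne_zero hq hprim hdvd
    have hMM : q ^ ((M : ℤ)) * q ^ ((M : ℤ)) = 1 := by
      rw [← zpow_add₀ hq, show (M : ℤ) + M = 2 * M by ring]
      exact (q_zpow_one_iff hprim (M : ℤ)).2 dvd_rfl
    have cA : q ^ (n + (M : ℤ) - k + 1) = q ^ ((M : ℤ)) * q ^ (n - (k : ℤ) + 1) := by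
      rw [← zpow_add₀ hq]; exact qcongr hq hprim ⟨0, by ring⟩
    have cA2 : q ^ ((k : ℤ) - 1 - (n + (M : ℤ))) = q ^ ((M : ℤ)) * q ^ ((k : ℤ) - 1 - n) := by
      rw [← zpow_add₀ hq]; exact qcongr hq hprim ⟨-1, by ring⟩
    have cD : q ^ ((k : ℤ)) = q ^ ((M : ℤ)) * q ^ ((k : ℤ) - M) := by
      rw [← zpow_add₀ hq]; exact qcongr hq hprim ⟨0, by ring⟩
    have cD2 : q ^ (-(k : ℤ)) = q ^ ((M : ℤ)) * q ^ (-((k : ℤ) - M)) := by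
      rw [← zpow_add₀ hq]; exact qcongr hq hprim ⟨-1, by ring⟩
    have cB : q ^ (n - ((k : ℤ) - M) + 1) = q ^ ((M : ℤ)) * q ^ (n - (k : ℤ) + 1) := by
      rw [← zpow_add₀ hq]; exact qcongr hq hprim ⟨0, by ring⟩
    have cB2 : q ^ ((k : ℤ) - M - 1 - n) = q ^ ((M : ℤ)) * q ^ ((k : ℤ) - 1 - n) := by
      rw [← zpow_add₀ hq]; exact qcongr hq hprim ⟨-1, by ring⟩
    have cE : q ^ ((M : ℤ)) * q ^ ((M : ℤ) * ((k : ℤ) - 1)) = q ^ ((M : ℤ) * k) := by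
      rw [← zpow_add₀ hq]; exact qcongr hq hprim ⟨0, by ring⟩
    have cG : q ^ ((M : ℤ)) * q ^ ((M : ℤ) * ((k : ℤ) - 1 - M - n)) =
        q ^ ((M : ℤ) * ((k : ℤ) - M - n)) := by
      rw [← zpow_add₀ hq]; exact qcongr hq hprim ⟨0, by ring⟩
    apply mul_left_cancel₀ hD
    linear_combination (norm := ring_nf) h1 + gz q (n + (M : ℤ)) ((k : ℤ) - 1) * cA -
      gz q (n + (M : ℤ)) ((k : ℤ) - 1) * cA2 +
      (q ^ ((M : ℤ)) * (q ^ (n - (k : ℤ) + 1) - q ^ ((k : ℤ) - 1 - n))) * IH1 +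
      (q ^ (n - (k : ℤ) + 1) - q ^ ((k : ℤ) - 1 - n)) * gz q n ((k : ℤ) - 1) * cE +
      (q ^ (n - (k : ℤ) + 1) - q ^ ((k : ℤ) - 1 - n)) * gz q n ((k : ℤ) - 1 - M) * cG -
      q ^ ((M : ℤ) * k) * h2 -
      q ^ ((M : ℤ) * ((k : ℤ) - M - n)) *
        (gz q n ((k : ℤ) - M) * cD - gz q n ((k : ℤ) - M) * cD2 + q ^ ((M : ℤ)) * h3 +
          q ^ ((M : ℤ)) * gz q n ((k : ℤ) - M - 1) * cB -
          q ^ ((M : ℤ)) * gz q n ((k : ℤ) - M - 1) * cB2 +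
          (q ^ (n - (k : ℤ) + 1) - q ^ ((k : ℤ) - 1 - n)) * gz q n ((k : ℤ) - M - 1) * hMM)
end QL
namespace QL

lemma genBinom_zero' (a : ℤ) : genBinom a 0 = 1 := by simp [genBinom]

lemma genBinom_zero_succ (c : ℕ) : genBinom 0 (c + 1) = 0 := by
  rw [genBinom, Finset.prod_eq_zero (Finset.mem_range.2 (Nat.succ_pos c))]
  · simp
  · simp

lemma genBinom_pascal (a : ℤ) (c : ℕ) :
    genBinom (a + 1) (c + 1) = genBinom a (c + 1) + genBinom a c := by
  rw [genBinom, genBinom, genBinom]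
  have h1 : (∏ i ∈ Finset.range (c+1), (((a + 1 : ℤ) : ℂ) - (i : ℂ))) =
      ((a : ℂ) + 1) * ∏ i ∈ Finset.range c, ((a : ℂ) - (i : ℂ)) := by
    rw [Finset.prod_range_succ', mul_comm]
    congr 1
    · norm_num
    · apply Finset.prod_congr rfl
      intro i _
      push_cast
      ring
  have h2 : (∏ i ∈ Finset.range (c+1), ((a : ℂ) - (i : ℂ))) =
      (∏ i ∈ Finset.range c, ((a : ℂ) - (i : ℂ))) * ((a : ℂ) - c) :=
    Finset.prod_range_succ _ _
  have hfact : (((c+1).factorial : ℕ) : ℂ) = ((c : ℂ) + 1) * ((c.factorial : ℕ) : ℂ) := by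
    rw [Nat.factorial_succ]; push_cast; ring
  have hc0 : ((c.factorial : ℕ) : ℂ) ≠ 0 := by exact_mod_cast c.factorial_ne_zero
  have hc1 : ((c : ℂ) + 1) ≠ 0 := Nat.cast_add_one_ne_zero c
  rw [h1, h2, hfact]
  field_simp
  ring

end QL
namespace QL

variable {q : ℂ} {M : ℕ}

set_option maxHeartbeats 1600000 in
lemma main (hM : 1 ≤ M) (hq : q ≠ 0) (hprim : IsPrimitiveRoot (q ^ 2) M)
    {b e : ℕ} (hb : b < M) (he : e < M) :
    ∀ (a : ℤ) (c : ℕ),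
      gz q (a * M + b) ((c : ℤ) * M + e) =
        q ^ ((M : ℤ) ^ 2 * (c : ℤ) * (a + 1) + (M : ℤ) * (a * (e : ℤ) - (b : ℤ) * (c : ℤ))) *
          qbinom q (b : ℤ) e * genBinom a c := by
  have hM1 : (1 : ℤ) ≤ (M : ℤ) := by exact_mod_cast hM
  -- base case a = 0
  have base : ∀ c : ℕ,
      gz q ((0 : ℤ) * M + b) ((c : ℤ) * M + e) =
        q ^ ((M : ℤ) ^ 2 * (c : ℤ) * ((0:ℤ) + 1) + (M : ℤ) * ((0:ℤ) * (e : ℤ) - (b : ℤ) * (c : ℤ))) *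
          qbinom q (b : ℤ) e * genBinom 0 c := by
    intro c
    cases c with
    | zero =>
      rw [genBinom_zero', mul_one]
      push_cast
      rw [show (0 : ℤ) * M + b = ((b : ℕ) : ℤ) by ring, show (0 : ℤ) * M + e = ((e : ℕ) : ℤ) by ring]
      rw [gz_natCast]
      norm_num
    | succ c =>
      rw [genBinom_zero_succ, mul_zero]
      apply gz_eq_zero (by positivity)
      push_cast
      have hc0 : (0 : ℤ) ≤ (c : ℤ) := by positivity
      nlinarith
  -- upward step
  have stepUp : ∀ a : ℤ,
      (∀ c : ℕ, gz q (a * M + b) ((c : ℤ) * M + e) =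
        q ^ ((M : ℤ) ^ 2 * (c : ℤ) * (a + 1) + (M : ℤ) * (a * (e : ℤ) - (b : ℤ) * (c : ℤ))) *
          qbinom q (b : ℤ) e * genBinom a c) →
      (∀ c : ℕ, gz q ((a + 1) * M + b) ((c : ℤ) * M + e) =
        q ^ ((M : ℤ) ^ 2 * (c : ℤ) * (a + 1 + 1) + (M : ℤ) * ((a + 1) * (e : ℤ) - (b : ℤ) * (c : ℤ))) *
          qbinom q (b : ℤ) e * genBinom (a + 1) c) := by
    intro a Qa c
    cases c with
    | zero =>
      have hS := Slemma hM hq hprim e (a * M + b)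
      rw [gz_neg (show (e : ℤ) - M < 0 by omega)] at hS
      have Qa0 := Qa 0
      rw [genBinom_zero', mul_one] at Qa0
      rw [genBinom_zero', mul_one]
      have cc0 : q ^ ((M : ℤ) * e) *
          q ^ ((M : ℤ) ^ 2 * ((0:ℕ) : ℤ) * (a + 1) + (M : ℤ) * (a * (e : ℤ) - (b : ℤ) * ((0:ℕ) : ℤ))) =
          q ^ ((M : ℤ) ^ 2 * ((0:ℕ) : ℤ) * (a + 1 + 1) + (M : ℤ) * ((a + 1) * (e : ℤ) - (b : ℤ) * ((0:ℕ) : ℤ))) := by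
        rw [← zpow_add₀ hq]; exact qcongr hq hprim ⟨0, by push_cast; ring⟩
      linear_combination (norm := ring_nf) hS + q ^ ((M : ℤ) * e) * Qa0 + qbinom q (b : ℤ) e * cc0
    | succ c =>
      have hS := Slemma hM hq hprim ((c + 1) * M + e) (a * M + b)
      push_cast at hS
      have Qac := Qa (c + 1)
      push_cast at Qac
      have Qac' := Qa c
      have pas := genBinom_pascal a c
      push_cast
      have cc1 : q ^ ((M : ℤ) * (((c:ℤ) + 1) * M + e)) *
          q ^ ((M : ℤ) ^ 2 * ((c:ℤ) + 1) * (a + 1) + (M : ℤ) * (a * (e : ℤ) - (b : ℤ) * ((c:ℤ) + 1))) =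
          q ^ ((M : ℤ) ^ 2 * ((c:ℤ) + 1) * (a + 1 + 1) + (M : ℤ) * ((a + 1) * (e : ℤ) - (b : ℤ) * ((c:ℤ) + 1))) := by
        rw [← zpow_add₀ hq]; exact qcongr hq hprim ⟨0, by ring⟩
      have cc2 : q ^ ((M : ℤ) * ((((c:ℤ) + 1) * M + e) - M - (a * M + b))) *
          q ^ ((M : ℤ) ^ 2 * (c:ℤ) * (a + 1) + (M : ℤ) * (a * (e : ℤ) - (b : ℤ) * (c:ℤ))) =
          q ^ ((M : ℤ) ^ 2 * ((c:ℤ) + 1) * (a + 1 + 1) + (M : ℤ) * ((a + 1) * (e : ℤ) - (b : ℤ) * ((c:ℤ) + 1))) := by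
        rw [← zpow_add₀ hq]; exact qcongr hq hprim ⟨-(M : ℤ) * (a + 1), by ring⟩
      linear_combination (norm := ring_nf) hS +
        q ^ ((M : ℤ) * (((c:ℤ) + 1) * M + e)) * Qac +
        q ^ ((M : ℤ) * ((((c:ℤ) + 1) * M + e) - M - (a * M + b))) * Qac' +
        qbinom q (b : ℤ) e * genBinom a (c + 1) * cc1 +
        qbinom q (b : ℤ) e * genBinom a c * cc2 -
        q ^ ((M : ℤ) ^ 2 * ((c:ℤ) + 1) * (a + 1 + 1) + (M : ℤ) * ((a + 1) * (e : ℤ) - (b : ℤ) * ((c:ℤ) + 1))) *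
          qbinom q (b : ℤ) e * pas
  -- downward step
  have stepDown : ∀ a : ℤ,
      (∀ c : ℕ, gz q (a * M + b) ((c : ℤ) * M + e) =
        q ^ ((M : ℤ) ^ 2 * (c : ℤ) * (a + 1) + (M : ℤ) * (a * (e : ℤ) - (b : ℤ) * (c : ℤ))) *
          qbinom q (b : ℤ) e * genBinom a c) →
      (∀ c : ℕ, gz q ((a - 1) * M + b) ((c : ℤ) * M + e) =
        q ^ ((M : ℤ) ^ 2 * (c : ℤ) * (a - 1 + 1) + (M : ℤ) * ((a - 1) * (e : ℤ) - (b : ℤ) * (c : ℤ))) *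
          qbinom q (b : ℤ) e * genBinom (a - 1) c) := by
    intro a Qa c
    induction c using Nat.strong_induction_on with
    | _ c IHc =>
    cases c with
    | zero =>
      have hS := Slemma hM hq hprim e ((a - 1) * M + b)
      rw [gz_neg (show (e : ℤ) - M < 0 by omega)] at hS
      have Qa0 := Qa 0
      rw [genBinom_zero', mul_one] at Qa0
      rw [genBinom_zero', mul_one]
      have cc0 : q ^ ((M : ℤ) ^ 2 * ((0:ℕ) : ℤ) * (a + 1) + (M : ℤ) * (a * (e : ℤ) - (b : ℤ) * ((0:ℕ) : ℤ))) =
          q ^ ((M : ℤ) * e) *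
          q ^ ((M : ℤ) ^ 2 * ((0:ℕ) : ℤ) * (a - 1 + 1) + (M : ℤ) * ((a - 1) * (e : ℤ) - (b : ℤ) * ((0:ℕ) : ℤ))) := by
        rw [← zpow_add₀ hq]; exact qcongr hq hprim ⟨0, by push_cast; ring⟩
      apply mul_left_cancel₀ (zpow_ne_zero ((M : ℤ) * e) hq)
      linear_combination (norm := ring_nf) (-1 : ℂ) * hS + Qa0 + qbinom q (b : ℤ) e * cc0
    | succ c =>
      have hS := Slemma hM hq hprim ((c + 1) * M + e) ((a - 1) * M + b)
      push_cast at hS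
      have Qac := Qa (c + 1)
      push_cast at Qac
      have IHc' := IHc c (by omega)
      have pas := genBinom_pascal (a - 1) c
      push_cast
      have dd1 : q ^ ((M : ℤ) ^ 2 * ((c:ℤ) + 1) * (a + 1) + (M : ℤ) * (a * (e : ℤ) - (b : ℤ) * ((c:ℤ) + 1))) =
          q ^ ((M : ℤ) * (((c:ℤ) + 1) * M + e)) *
          q ^ ((M : ℤ) ^ 2 * ((c:ℤ) + 1) * (a - 1 + 1) + (M : ℤ) * ((a - 1) * (e : ℤ) - (b : ℤ) * ((c:ℤ) + 1))) := by
        rw [← zpow_add₀ hq]; exact qcongr hq hprim ⟨0, by ring⟩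
      have dd2 : q ^ ((M : ℤ) ^ 2 * ((c:ℤ) + 1) * (a + 1) + (M : ℤ) * (a * (e : ℤ) - (b : ℤ) * ((c:ℤ) + 1))) =
          q ^ ((M : ℤ) * ((((c:ℤ) + 1) * M + e) - M - ((a - 1) * M + b))) *
          q ^ ((M : ℤ) ^ 2 * (c:ℤ) * (a - 1 + 1) + (M : ℤ) * ((a - 1) * (e : ℤ) - (b : ℤ) * (c:ℤ))) := by
        rw [← zpow_add₀ hq]; exact qcongr hq hprim ⟨(M : ℤ) * a, by ring⟩
      apply mul_left_cancel₀ (zpow_ne_zero ((M : ℤ) * (((c:ℤ) + 1) * M + e)) hq)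
      linear_combination (norm := ring_nf) (-1 : ℂ) * hS + Qac -
        q ^ ((M : ℤ) * ((((c:ℤ) + 1) * M + e) - M - ((a - 1) * M + b))) * IHc' +
        q ^ ((M : ℤ) ^ 2 * ((c:ℤ) + 1) * (a + 1) + (M : ℤ) * (a * (e : ℤ) - (b : ℤ) * ((c:ℤ) + 1))) *
          qbinom q (b : ℤ) e * pas +
        qbinom q (b : ℤ) e * genBinom (a - 1) (c + 1) * dd1 +
        qbinom q (b : ℤ) e * genBinom (a - 1) c * dd2
  intro a
  induction a using Int.induction_on with
  | zero => exact base
  | succ i ih => exact stepUp i ih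
  | pred i ih => exact stepDown (-(i : ℤ)) ih

end QL

/-- Let `M ≥ 1` and `q ∈ ℂˣ` with `q²` a primitive `M`-th root of unity.
Then for `a ∈ ℤ`, `c ∈ ℕ` and `0 ≤ b, e ≤ M − 1`,
`[aM+b choose cM+e]_q = q^{M²c(a+1) + M(ae − bc)} [b choose e]_q C(a, c)`. -/
theorem stmt6 (M : ℕ) (hM : 1 ≤ M) (q : ℂ) (hq : q ≠ 0)
    (hprim : IsPrimitiveRoot (q ^ 2) M)
    (a : ℤ) (c : ℕ) (b e : ℕ) (hb : b ≤ M - 1) (he : e ≤ M - 1) :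
    qbinom q (a * M + b) (c * M + e) =
      q ^ ((M : ℤ) ^ 2 * (c : ℤ) * (a + 1) + (M : ℤ) * (a * (e : ℤ) - (b : ℤ) * (c : ℤ))) *
        qbinom q (b : ℤ) e * genBinom a c := by
  have hb' : b < M := by omega
  have he' : e < M := by omega
  have h := QL.main hM hq hprim hb' he' a c
  rw [← QL.gz_natCast (q := q) (a * M + b) (c * M + e)] at *
  rw [show (((c * M + e : ℕ)) : ℤ) = (c : ℤ) * M + e by push_cast; ring]
  exact h
end

section
/- Let M ≥ 1 and let q ∈ ℂ^× be such that q² is a primitive M-th root of unity. Then for every integer z ∈ ℤ: [zM choose M]_q = z · q^{M²·(z+1)}. (Consequently the operator H̃ = [X̃⁺, X̃⁻] acts on a vector of weight zM by the integer eigenvalue z.) -/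
open Polynomial Finset

noncomputable def Aa (a : ℤ) : RatFunc ℚ := RatFunc.X ^ a - RatFunc.X ^ (-a)

lemma qbinom_eq (q : ℂ) (n : ℤ) (k : ℕ) :
    qbinom q n k = RatFunc.eval (algebraMap ℚ ℂ) q
      (∏ s ∈ Finset.range k, (Aa (n - (s : ℤ)) / Aa ((s : ℤ) + 1))) := rfl

lemma Aa_mul_pow (b : ℕ) :
    Aa b * RatFunc.X ^ b = RatFunc.X ^ (2 * b) - 1 := by
  have ht : (RatFunc.X : RatFunc ℚ) ≠ 0 := RatFunc.X_ne_zero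
  rw [Aa, sub_mul, ← zpow_natCast (RatFunc.X : RatFunc ℚ) b, ← zpow_add₀ ht, ← zpow_add₀ ht,
    neg_add_cancel, zpow_zero]
  congr 1
  rw [← zpow_natCast]
  congr 1
  push_cast; ring

lemma Aa_mul_pow_alg (b : ℕ) :
    Aa b * RatFunc.X ^ b = algebraMap ℚ[X] (RatFunc ℚ) (X ^ (2 * b) - 1) := by
  rw [Aa_mul_pow, map_sub, map_pow, map_one, RatFunc.algebraMap_X]

lemma prodA (Nn : ℕ) (k : ℕ → ℕ) :
    (∏ s ∈ range Nn, Aa (k s)) * RatFunc.X ^ (∑ s ∈ range Nn, k s)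
      = algebraMap ℚ[X] (RatFunc ℚ) (∏ s ∈ range Nn, (X ^ (2 * k s) - 1)) := by
  rw [← Finset.prod_pow_eq_pow_sum, ← Finset.prod_mul_distrib, map_prod]
  exact Finset.prod_congr rfl fun s _ => Aa_mul_pow_alg (k s)

lemma Aa_geom (w M : ℕ) :
    Aa (w * M : ℕ) * RatFunc.X ^ (w * M)
      = (∑ j ∈ range w, RatFunc.X ^ (2 * M * j)) * (RatFunc.X ^ (2 * M) - 1) := by
  have hs : (∑ j ∈ range w, (RatFunc.X : RatFunc ℚ) ^ (2 * M * j))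
      = ∑ j ∈ range w, ((RatFunc.X : RatFunc ℚ) ^ (2 * M)) ^ j := by
    refine Finset.sum_congr rfl fun j _ => ?_
    rw [← pow_mul]
  rw [Aa_mul_pow, hs, geom_sum_mul, ← pow_mul, show 2 * (w * M) = 2 * M * w by ring]

lemma Aa_neg (a : ℤ) : Aa (-a) = -Aa a := by
  rw [Aa, Aa, neg_neg]; ring

lemma Aa_ne_zero {a : ℤ} (ha : 0 < a) : Aa a ≠ 0 := by
  have ht : (RatFunc.X : RatFunc ℚ) ≠ 0 := RatFunc.X_ne_zero
  rw [Aa]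
  intro h
  rw [sub_eq_zero] at h
  have h2 : (RatFunc.X : RatFunc ℚ) ^ a * RatFunc.X ^ a
      = RatFunc.X ^ (-a) * RatFunc.X ^ a := by rw [h]
  rw [← zpow_add₀ ht, ← zpow_add₀ ht, neg_add_cancel, zpow_zero] at h2
  obtain ⟨b, rfl⟩ := Int.eq_ofNat_of_zero_le ha.le
  rw [show ((b : ℤ) + b) = ((2 * b : ℕ) : ℤ) by push_cast; ring, zpow_natCast] at h2
  have hb : 0 < b := by exact_mod_cast ha
  have h3 : ((X : ℚ[X]) ^ (2 * b)) = 1 := by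
    apply RatFunc.algebraMap_injective ℚ
    rw [map_pow, map_one, RatFunc.algebraMap_X, h2]
  have h4 := congrArg Polynomial.natDegree h3
  simp [Polynomial.natDegree_X_pow] at h4
  omega

lemma eval_of_mul_eq (q : ℂ) (f : RatFunc ℚ) (p d : ℚ[X])
    (hd : Polynomial.aeval q d ≠ 0)
    (h : f * algebraMap ℚ[X] (RatFunc ℚ) d = algebraMap ℚ[X] (RatFunc ℚ) p) :
    RatFunc.eval (algebraMap ℚ ℂ) q f = Polynomial.aeval q p / Polynomial.aeval q d := by
  have key : ∀ r : ℚ[X], Polynomial.eval₂ (algebraMap ℚ ℂ) q r = Polynomial.aeval q r := by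
    intro r; rw [Polynomial.aeval_def]
  have hd0 : d ≠ 0 := by rintro rfl; simp at hd
  have hdalg : (algebraMap ℚ[X] (RatFunc ℚ)) d ≠ 0 := RatFunc.algebraMap_ne_zero hd0
  have hf : f = algebraMap ℚ[X] (RatFunc ℚ) p / algebraMap ℚ[X] (RatFunc ℚ) d := by
    field_simp [← h]
    exact h
  have hdvd : RatFunc.denom f ∣ d := by
    rw [RatFunc.denom_dvd hd0]
    exact ⟨p, hf⟩
  have hdenom : Polynomial.eval₂ (algebraMap ℚ ℂ) q (RatFunc.denom f) ≠ 0 := by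
    obtain ⟨c, hc⟩ := hdvd
    intro h0
    apply hd
    rw [← key, hc, Polynomial.eval₂_mul, h0, zero_mul]
  have hone : Polynomial.eval₂ (algebraMap ℚ ℂ) q
      (RatFunc.denom (algebraMap ℚ[X] (RatFunc ℚ) d)) ≠ 0 := by
    rw [RatFunc.denom_algebraMap]; simp
  have hm := RatFunc.eval_mul (f := algebraMap ℚ ℂ) (a := q) hdenom hone
  rw [h] at hm
  rw [RatFunc.eval_algebraMap, RatFunc.eval_algebraMap] at hm
  simp only [Algebra.algebraMap_self_apply] at hm
  rw [key, key] at hm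
  rw [hm]
  field_simp

lemma eps_pow (M : ℕ) (hM : 1 ≤ M) (q : ℂ) (hq : q ≠ 0)
    (hprim : IsPrimitiveRoot (q ^ 2) M) :
    q ^ (M * (M - 1)) = (-1 : ℂ) ^ (M - 1) := by
  have hq2M : q ^ (2 * M) = 1 := by rw [pow_mul]; exact hprim.pow_eq_one
  rcases Nat.even_or_odd M with hE | hO
  · obtain ⟨kk, hkk⟩ := hE
    have hk1 : 1 ≤ kk := by omega
    have hqM : q ^ M = -1 := by
      have hsq : (q ^ M - 1) * (q ^ M + 1) = 0 := by
        have : q ^ M * q ^ M = 1 := by rw [← pow_add, show M + M = 2 * M by ring, hq2M]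
        linear_combination this
      rcases mul_eq_zero.mp hsq with h1 | h1
      · exfalso
        have hqM1 : q ^ M = 1 := by linear_combination h1
        have : (q ^ 2) ^ kk = 1 := by
          rw [← pow_mul, show 2 * kk = M by omega, hqM1]
        have hdvd := (hprim.pow_eq_one_iff_dvd kk).mp this
        have := Nat.le_of_dvd (by omega) hdvd
        omega
      · linear_combination h1
    rw [pow_mul, hqM]
  · obtain ⟨kk, hkk⟩ := hO
    subst hkk
    rw [show (2 * kk + 1) * (2 * kk + 1 - 1) = 2 * (2 * kk + 1) * kk by
        simp only [Nat.add_sub_cancel]; ring,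
      pow_mul, hq2M, one_pow, show 2 * kk + 1 - 1 = 2 * kk by omega, pow_mul]
    norm_num

/-- Let `M ≥ 1` and `q ∈ ℂˣ` with `q²` a primitive `M`-th root of unity.
Then for every `z ∈ ℤ`, `[zM choose M]_q = z q^{M²(z+1)}`. -/
theorem stmt7 (M : ℕ) (hM : 1 ≤ M) (q : ℂ) (hq : q ≠ 0)
    (hprim : IsPrimitiveRoot (q ^ 2) M) (z : ℤ) :
    qbinom q (z * M) M = (z : ℂ) * q ^ ((M : ℤ) ^ 2 * (z + 1)) := by
  have ht : (RatFunc.X : RatFunc ℚ) ≠ 0 := RatFunc.X_ne_zero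
  obtain ⟨N, rfl⟩ : ∃ N, M = N + 1 := ⟨M - 1, by omega⟩
  have hq2M : q ^ (2 * (N + 1)) = 1 := by rw [pow_mul]; exact hprim.pow_eq_one
  have hEps : q ^ ((N + 1) * N) = (-1 : ℂ) ^ N := by
    simpa using eps_pow (N + 1) hM q hq hprim
  have hqper : ∀ a b γ : ℤ, a = b + 2 * ((N + 1 : ℕ) : ℤ) * γ → q ^ a = q ^ b := by
    intro a b γ habc
    rw [habc, zpow_add₀ hq,
      show (2 * ((N + 1 : ℕ) : ℤ) * γ) = ((2 * (N + 1) : ℕ) : ℤ) * γ by push_cast; ring,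
      zpow_mul, zpow_natCast, hq2M, one_zpow, mul_one]
  by_cases hz0 : z = 0
  · subst hz0
    rw [qbinom_eq]
    rw [Finset.prod_eq_zero (Finset.mem_range.mpr (show 0 < N + 1 by omega))
      (by norm_num [Aa])]
    simp
  -- main case
  have hw1 : 1 ≤ z.natAbs := Int.natAbs_pos.mpr hz0
  set w := z.natAbs with hwdef
  set nZ := z * ((N + 1 : ℕ) : ℤ) with hnZ
  set W := w * (N + 1) with hWdef
  set k : ℕ → ℕ := fun s => (nZ - 1 - (s : ℤ)).natAbs with hkdef
  set gp : ℚ[X] := ∑ j ∈ range w, (X : ℚ[X]) ^ (2 * (N + 1) * j) with hgpdef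
  set pn : ℚ[X] := ∏ s ∈ range N, ((X : ℚ[X]) ^ (2 * k s) - 1) with hpndef
  set dd : ℚ[X] := ∏ s ∈ range N, ((X : ℚ[X]) ^ (2 * (s + 1)) - 1) with hdddef
  set S1 := ∑ s ∈ range N, (s + 1) with hS1def
  set K := ∑ s ∈ range N, k s with hKdef
  set c : ℤ := (S1 : ℤ) + ((N + 1 : ℕ) : ℤ) - W - K with hcdef
  set l := c.toNat with hldef
  set m := (-c).toNat with hmdef
  set ζ : RatFunc ℚ := if 0 ≤ z then 1 else -1 with hζdef
  set ρ : ℚ := if 0 ≤ z then 1 else (-1) ^ (N + 1) with hρdef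
  clear_value ρ ζ m l c K S1 dd pn gp k W nZ w
  have hlm : (l : ℤ) - (m : ℤ) = c := by rw [hldef, hmdef]; omega
  have hgpalg : algebraMap ℚ[X] (RatFunc ℚ) gp
      = ∑ j ∈ range w, (RatFunc.X : RatFunc ℚ) ^ (2 * (N + 1) * j) := by
    rw [hgpdef, map_sum]
    exact Finset.sum_congr rfl fun j _ => by rw [map_pow, RatFunc.algebraMap_X]
  have h1 : (∏ s ∈ range N, Aa (k s)) * RatFunc.X ^ K
      = algebraMap ℚ[X] (RatFunc ℚ) pn := by
    rw [hKdef, hpndef, hkdef]; exact prodA N _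
  have h2 : (∏ s ∈ range N, Aa ((s : ℤ) + 1)) * RatFunc.X ^ S1
      = algebraMap ℚ[X] (RatFunc ℚ) dd := by
    rw [show (∏ s ∈ range N, Aa ((s : ℤ) + 1)) = ∏ s ∈ range N, Aa ((s + 1 : ℕ)) from
      Finset.prod_congr rfl fun s _ => by congr 1 <;> omega, hS1def, hdddef]
    exact prodA N (fun s => s + 1)
  have h3 : Aa nZ * RatFunc.X ^ W
      = ζ * algebraMap ℚ[X] (RatFunc ℚ) gp * (RatFunc.X ^ (2 * (N + 1)) - 1) := by
    rcases le_or_gt 0 z with hzp | hzn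
    · have hzw : z = (w : ℤ) := by rw [hwdef]; omega
      have hnZW : nZ = ((W : ℕ) : ℤ) := by rw [hnZ, hWdef, hzw]; push_cast; try ring
      rw [hζdef, if_pos hzp, one_mul, hgpalg, hnZW, hWdef]
      exact Aa_geom w (N + 1)
    · have hzw : z = -(w : ℤ) := by rw [hwdef]; omega
      have hnZW : nZ = -((W : ℕ) : ℤ) := by rw [hnZ, hWdef, hzw]; push_cast; try ring
      rw [hζdef, if_neg (not_le.mpr hzn), hgpalg, hnZW, Aa_neg, hWdef, neg_mul,
        Aa_geom w (N + 1)]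
      ring
  have h4 : (RatFunc.X : RatFunc ℚ) ^ (2 * (N + 1)) - 1
      = Aa ((N + 1 : ℕ)) * RatFunc.X ^ (N + 1) := (Aa_mul_pow (N + 1)).symm
  have h5 : (∏ s ∈ range N, Aa (nZ - 1 - (s : ℤ)))
      = ζ ^ N * ∏ s ∈ range N, Aa (k s) := by
    have hfac : ∀ s ∈ range N, Aa (nZ - 1 - (s : ℤ)) = ζ * Aa (k s) := by
      intro s hs
      have hks : k s = (nZ - 1 - (s : ℤ)).natAbs := by rw [hkdef]
      have hsN : (s : ℤ) < (N : ℤ) := by exact_mod_cast Finset.mem_range.mp hs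
      rcases le_or_gt 0 z with hzp | hzn
      · have h1z : (1 : ℤ) ≤ z := by omega
        have hbig : ((N + 1 : ℕ) : ℤ) ≤ nZ := by
          rw [hnZ]; exact le_mul_of_one_le_left (by positivity) h1z
        rw [hζdef, if_pos hzp, one_mul]
        congr 1
        omega
      · have hsmall : nZ ≤ -((N + 1 : ℕ) : ℤ) := by
          rw [hnZ]
          have h1 : z * ((N + 1 : ℕ) : ℤ) ≤ (-1) * ((N + 1 : ℕ) : ℤ) :=
            mul_le_mul_of_nonneg_right (by omega) (by positivity)
          linarith
        rw [hζdef, if_neg (not_le.mpr hzn)]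
        rw [show nZ - 1 - (s : ℤ) = -((k s : ℤ)) by omega, Aa_neg]
        ring
    rw [Finset.prod_congr rfl hfac, Finset.prod_mul_distrib, Finset.prod_const,
      Finset.card_range]
  have hDr0 : (∏ s ∈ range (N + 1), Aa ((s : ℤ) + 1)) ≠ 0 :=
    Finset.prod_ne_zero_iff.mpr fun s _ => Aa_ne_zero (by positivity)
  have hρalg : algebraMap ℚ[X] (RatFunc ℚ) (C ρ) = ζ ^ (N + 1) := by
    rcases le_or_gt 0 z with hzp | hzn
    · rw [hρdef, hζdef, if_pos hzp, if_pos hzp, Polynomial.C_1, map_one, one_pow]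
    · rw [hρdef, hζdef, if_neg (not_le.mpr hzn), if_neg (not_le.mpr hzn),
        RatFunc.algebraMap_C, map_pow, map_neg, map_one]
  have hexp : N + 1 + m + S1 = l + K + W := by omega
  have hNr : (∏ s ∈ range (N + 1), Aa (nZ - (s : ℤ)))
      = (∏ s ∈ range N, Aa (nZ - 1 - (s : ℤ))) * Aa nZ := by
    rw [Finset.prod_range_succ']
    congr 1
    · exact Finset.prod_congr rfl fun s _ => by congr 1 <;> omega
    · congr 1 <;> omega
  have hDrsplit : (∏ s ∈ range (N + 1), Aa ((s : ℤ) + 1))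
      = (∏ s ∈ range N, Aa ((s : ℤ) + 1)) * Aa ((N + 1 : ℕ)) := by
    rw [Finset.prod_range_succ]
    congr 1 <;> omega
  have HC : (∏ s ∈ range (N + 1), Aa (nZ - (s : ℤ))) * algebraMap ℚ[X] (RatFunc ℚ) (dd * X ^ m)
      = (∏ s ∈ range (N + 1), Aa ((s : ℤ) + 1))
        * algebraMap ℚ[X] (RatFunc ℚ) (C ρ * (pn * gp) * X ^ l) := by
    apply mul_right_cancel₀ (pow_ne_zero (K + W + S1) ht)
    have halgm : algebraMap ℚ[X] (RatFunc ℚ) (dd * X ^ m)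
        = algebraMap ℚ[X] (RatFunc ℚ) dd * RatFunc.X ^ m := by
      rw [map_mul, map_pow, RatFunc.algebraMap_X]
    have halgl : algebraMap ℚ[X] (RatFunc ℚ) (C ρ * (pn * gp) * X ^ l)
        = ζ ^ (N + 1) * (algebraMap ℚ[X] (RatFunc ℚ) pn * algebraMap ℚ[X] (RatFunc ℚ) gp)
          * RatFunc.X ^ l := by
      simp only [map_mul, map_pow, RatFunc.algebraMap_X, hρalg]
    calc (∏ s ∈ range (N + 1), Aa (nZ - (s : ℤ))) * algebraMap ℚ[X] (RatFunc ℚ) (dd * X ^ m)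
          * RatFunc.X ^ (K + W + S1)
        = ζ ^ N * ((∏ s ∈ range N, Aa (k s)) * RatFunc.X ^ K) * (Aa nZ * RatFunc.X ^ W)
          * algebraMap ℚ[X] (RatFunc ℚ) dd * RatFunc.X ^ (m + S1) := by
          rw [hNr, h5, halgm]; ring
      _ = ζ ^ N * algebraMap ℚ[X] (RatFunc ℚ) pn
          * (ζ * algebraMap ℚ[X] (RatFunc ℚ) gp * (RatFunc.X ^ (2 * (N + 1)) - 1))
          * algebraMap ℚ[X] (RatFunc ℚ) dd * RatFunc.X ^ (m + S1) := by
          rw [h1, h3]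
      _ = ζ ^ (N + 1) * (algebraMap ℚ[X] (RatFunc ℚ) pn * algebraMap ℚ[X] (RatFunc ℚ) gp)
          * algebraMap ℚ[X] (RatFunc ℚ) dd
          * (Aa ((N + 1 : ℕ)) * RatFunc.X ^ (N + 1 + m + S1)) := by
          rw [h4]; ring
      _ = ζ ^ (N + 1) * (algebraMap ℚ[X] (RatFunc ℚ) pn * algebraMap ℚ[X] (RatFunc ℚ) gp)
          * algebraMap ℚ[X] (RatFunc ℚ) dd
          * (Aa ((N + 1 : ℕ)) * RatFunc.X ^ (l + K + W)) := by rw [hexp]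
      _ = ((∏ s ∈ range N, Aa ((s : ℤ) + 1)) * RatFunc.X ^ S1) * Aa ((N + 1 : ℕ))
          * (ζ ^ (N + 1) * (algebraMap ℚ[X] (RatFunc ℚ) pn * algebraMap ℚ[X] (RatFunc ℚ) gp)
            * RatFunc.X ^ l) * RatFunc.X ^ (K + W) := by rw [h2]; ring
      _ = (∏ s ∈ range (N + 1), Aa ((s : ℤ) + 1))
          * algebraMap ℚ[X] (RatFunc ℚ) (C ρ * (pn * gp) * X ^ l)
          * RatFunc.X ^ (K + W + S1) := by
          rw [hDrsplit, halgl]; ring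
  -- evaluation
  have hddval : (Polynomial.aeval q) dd = ∏ s ∈ range N, (q ^ (2 * (s + 1)) - 1) := by
    rw [hdddef, map_prod]
    exact Finset.prod_congr rfl fun s _ => by simp
  have hdV0 : (∏ s ∈ range N, (q ^ (2 * (s + 1)) - 1)) ≠ 0 := by
    apply Finset.prod_ne_zero_iff.mpr
    intro s hs
    rw [show q ^ (2 * (s + 1)) = (q ^ 2) ^ (s + 1) by rw [← pow_mul]]
    exact sub_ne_zero.mpr (hprim.pow_ne_one_of_pos_of_lt (by omega)
      (by simpa using Finset.mem_range.mp hs))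
  have hdd0 : (Polynomial.aeval q) dd ≠ 0 := by rw [hddval]; exact hdV0
  have hden : (Polynomial.aeval q) (dd * X ^ m) ≠ 0 := by
    rw [map_mul, map_pow, aeval_X]
    exact mul_ne_zero hdd0 (pow_ne_zero _ hq)
  have H : (∏ s ∈ range (N + 1), (Aa (nZ - (s : ℤ)) / Aa ((s : ℤ) + 1)))
      * algebraMap ℚ[X] (RatFunc ℚ) (dd * X ^ m)
      = algebraMap ℚ[X] (RatFunc ℚ) (C ρ * (pn * gp) * X ^ l) := by
    rw [Finset.prod_div_distrib, div_mul_eq_mul_div, HC]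
    exact mul_div_cancel_left₀ _ hDr0
  rw [qbinom_eq, eval_of_mul_eq q _ (C ρ * (pn * gp) * X ^ l) (dd * X ^ m) hden H]
  have hgpval : (Polynomial.aeval q) gp = (w : ℂ) := by
    rw [hgpdef, map_sum]
    have hterm : ∀ j ∈ range w, (Polynomial.aeval q) ((X : ℚ[X]) ^ (2 * (N + 1) * j)) = 1 := by
      intro j _
      rw [map_pow, aeval_X, pow_mul, hq2M, one_pow]
    rw [Finset.sum_congr rfl hterm, Finset.sum_const, Finset.card_range]
    simp
  have hpnval : (Polynomial.aeval q) pn = ∏ s ∈ range N, (q ^ (2 * k s) - 1) := by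
    rw [hpndef, map_prod]
    exact Finset.prod_congr rfl fun s _ => by simp
  have hnum : (Polynomial.aeval q) (C ρ * (pn * gp) * X ^ l)
      = algebraMap ℚ ℂ ρ * ((∏ s ∈ range N, (q ^ (2 * k s) - 1)) * (w : ℂ)) * q ^ l := by
    simp only [map_mul, map_pow, aeval_X, aeval_C, hgpval, hpnval]
  have hdenval : (Polynomial.aeval q) (dd * X ^ m)
      = (∏ s ∈ range N, (q ^ (2 * (s + 1)) - 1)) * q ^ m := by
    rw [map_mul, map_pow, aeval_X, hddval]
  rw [hnum, hdenval]
  have hBne : (∏ s ∈ range N, (q ^ (2 * (s + 1)) - 1)) * q ^ m ≠ 0 :=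
    mul_ne_zero hdV0 (pow_ne_zero _ hq)
  have F1 : (l : ℤ) - (m : ℤ) = (S1 : ℤ) + ((N + 1 : ℕ) : ℤ) - W - K := by
    rw [hlm]; exact hcdef
  have F4 : ((W : ℕ) : ℤ) = (w : ℤ) * ((N + 1 : ℕ) : ℤ) := by exact_mod_cast hWdef
  rcases le_or_gt 0 z with hzp | hzn
  · -- positive case
    have hzw : z = (w : ℤ) := by rw [hwdef]; omega
    have hnZW : nZ = ((W : ℕ) : ℤ) := by rw [hnZ, hWdef, hzw]; push_cast; try ring
    have hks : ∀ s ∈ range N, (k s : ℤ) = nZ - 1 - (s : ℤ) := by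
      intro s hs
      have hsN : (s : ℤ) < (N : ℤ) := by exact_mod_cast Finset.mem_range.mp hs
      have h1z : (1 : ℤ) ≤ z := by omega
      have hbig : ((N + 1 : ℕ) : ℤ) ≤ nZ := by
        rw [hnZ]; exact le_mul_of_one_le_left (by positivity) h1z
      have hks0 : k s = (nZ - 1 - (s : ℤ)).natAbs := by rw [hkdef]
      omega
    have hkvalp : ∀ s ∈ range N, 2 * k s + 2 * (s + 1) = 2 * W := by
      intro s hs
      have h1 := hks s hs
      omega
    have hKS1 : K + S1 = N * W := by
      rw [hKdef, hS1def, ← Finset.sum_add_distrib,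
        Finset.sum_congr rfl (fun s hs => show k s + (s + 1) = W by
          have := hkvalp s hs
          have hks0 : k s = (nZ - 1 - (s : ℤ)).natAbs := by rw [hkdef]
          omega),
        Finset.sum_const, Finset.card_range, smul_eq_mul]
    have hfactor : ∀ s ∈ range N, q ^ (2 * k s) - 1
        = -(q ^ (2 * (s + 1)) - 1) * (q ^ (2 * (s + 1)))⁻¹ := by
      intro s hs
      have hne : (q ^ (2 * (s + 1)) : ℂ) ≠ 0 := pow_ne_zero _ hq
      have hu : q ^ (2 * k s) * q ^ (2 * (s + 1)) = 1 := by
        rw [← pow_add, hkvalp s hs, hWdef, show 2 * (w * (N + 1)) = 2 * (N + 1) * w by ring,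
          pow_mul q (2 * (N + 1)) w, hq2M, one_pow]
      rw [eq_inv_of_mul_eq_one_left hu]
      field_simp
      ring
    have hqsum : (∏ s ∈ range N, q ^ (2 * (s + 1))) = q ^ (2 * S1) := by
      rw [Finset.prod_pow_eq_pow_sum, ← Finset.mul_sum, ← hS1def]
    have hpnprod : (∏ s ∈ range N, (q ^ (2 * k s) - 1))
        = (-1 : ℂ) ^ N * (∏ s ∈ range N, (q ^ (2 * (s + 1)) - 1)) * (q ^ (2 * S1))⁻¹ := by
      rw [Finset.prod_congr rfl hfactor,
        show (∏ s ∈ range N, (-(q ^ (2 * (s + 1)) - 1) * (q ^ (2 * (s + 1)))⁻¹))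
          = ∏ s ∈ range N, ((-1) * ((q ^ (2 * (s + 1)) - 1) * (q ^ (2 * (s + 1)))⁻¹)) from
          Finset.prod_congr rfl fun s _ => by ring,
        Finset.prod_mul_distrib, Finset.prod_const, Finset.card_range,
        Finset.prod_mul_distrib, Finset.prod_inv_distrib, hqsum]
      ring
    have key : q ^ ((N + 1) * N) * (q ^ (2 * S1))⁻¹ * q ^ l
        = q ^ (((N + 1 : ℕ) : ℤ) ^ 2 * ((w : ℤ) + 1)) * q ^ m := by
      rw [← zpow_natCast q ((N + 1) * N), ← zpow_natCast q (2 * S1), ← zpow_natCast q l,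
        ← zpow_natCast q m, ← zpow_neg, ← zpow_add₀ hq, ← zpow_add₀ hq, ← zpow_add₀ hq]
      apply hqper _ _ (-(((N + 1 : ℕ) : ℤ)) * (w : ℤ))
      have F2 : (K : ℤ) + (S1 : ℤ) = (N : ℤ) * ((W : ℕ) : ℤ) := by exact_mod_cast hKS1
      push_cast
      push_cast at F1 F2 F4
      linear_combination F1 - F2 - ((N : ℤ) + 1) * F4
    rw [hρdef, if_pos hzp, map_one, hpnprod, hzw, div_eq_iff hBne, ← hEps]
    simp only [Int.cast_natCast]
    linear_combination ((w : ℂ) * (∏ s ∈ range N, (q ^ (2 * (s + 1)) - 1))) * key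
  · -- negative case
    have hzw : z = -(w : ℤ) := by rw [hwdef]; omega
    have hnZW : nZ = -((W : ℕ) : ℤ) := by rw [hnZ, hWdef, hzw]; push_cast; try ring
    have hkvaln : ∀ s ∈ range N, k s = W + (s + 1) := by
      intro s hs
      have hks0 : k s = (nZ - 1 - (s : ℤ)).natAbs := by rw [hkdef]
      omega
    have hKn : K = N * W + S1 := by
      rw [hKdef, hS1def, Finset.sum_congr rfl (fun s hs => hkvaln s hs),
        Finset.sum_add_distrib, Finset.sum_const, Finset.card_range, smul_eq_mul]
    have hfactorn : ∀ s ∈ range N, q ^ (2 * k s) - 1 = q ^ (2 * (s + 1)) - 1 := by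
      intro s hs
      rw [show 2 * k s = 2 * (s + 1) + 2 * (N + 1) * w by
          rw [hkvaln s hs, hWdef]; ring,
        pow_add, pow_mul q (2 * (N + 1)) w, hq2M, one_pow, mul_one]
    have keyn : q ^ ((N + 1) * N) * q ^ l
        = q ^ (((N + 1 : ℕ) : ℤ) ^ 2 * (-(w : ℤ) + 1)) * q ^ m := by
      rw [← zpow_natCast q ((N + 1) * N), ← zpow_natCast q l, ← zpow_natCast q m,
        ← zpow_add₀ hq, ← zpow_add₀ hq]
      apply hqper _ _ 0
      have F2 : (K : ℤ) = (N : ℤ) * ((W : ℕ) : ℤ) + (S1 : ℤ) := by exact_mod_cast hKn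
      push_cast
      push_cast at F1 F2 F4
      linear_combination F1 - F2 - ((N : ℤ) + 1) * F4
    rw [hρdef, if_neg (not_le.mpr hzn), Finset.prod_congr rfl hfactorn, hzw,
      div_eq_iff hBne]
    rw [show (algebraMap ℚ ℂ) ((-1 : ℚ) ^ (N + 1)) = (-1 : ℂ) ^ (N + 1) by
      rw [map_pow, map_neg, map_one]]
    rw [pow_succ, ← hEps]
    simp only [Int.cast_neg, Int.cast_natCast]
    linear_combination (-(w : ℂ) * (∏ s ∈ range N, (q ^ (2 * (s + 1)) - 1))) * keyn
end

section
/- Let n, m be coprime positive integers with m ≥ 3, q = exp(2πi·n/m), and let λ be a nonnegative integer with 2·n·λ < m. On V = ℂ^{λ+1} with standard basis e_0,…,e_λ define linear operators H·e_k = (λ − 2k)·e_k, X⁻·e_k = e_{k+1} (with e_{λ+1} := 0), and X⁺·e_k = [k]_q·[λ−k+1]_q·e_{k−1} (with e_{−1} := 0). Then: (i) H·X^± − X^±·H = ±2·X^± and (X⁺X⁻ − X⁻X⁺)·e_k = [λ−2k]_q·e_k for all k; (ii) for every 1 ≤ j ≤ λ one has [j]_q·[λ−j+1]_q > 0, so the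 Hermitian inner product defined by ⟨e_k, e_l⟩ = δ_{kl}·∏_{j=1}^{k} [j]_q·[λ−j+1]_q is positive definite; (iii) with respect to this inner product, ⟨X^±·v, w⟩ = ⟨v, X^∓·w⟩ and ⟨H·v, w⟩ = ⟨v, H·w⟩ for all v, w ∈ V. Thus V is a finite-dimensional unitary highest-weight representation of the compact real form (X^±)* = X^∓, H* = H of U_q^{fin}(sl₂) at the root of unity q. -/
/-- For coprime `n, m` with `m ≥ 3`, `q = exp(2πi n/m)`, and `0 ≤ λ` with
`2nλ < m`, the operators `H, X⁺, X⁻` on `V = ℂ^{λ+1}` defined on the standard basis by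
`H e_k = (λ − 2k) e_k`, `X⁻ e_k = e_{k+1}` (`e_{λ+1} := 0`), `X⁺ e_k = [k][λ−k+1] e_{k−1}`
satisfy (i) the `U_q(sl₂)`-commutation relations, (ii) the coefficients `[j][λ−j+1]`
(`1 ≤ j ≤ λ`) are positive reals, so the Hermitian form with `⟨e_k, e_l⟩ = δ_{kl}
∏_{j=1}^k [j][λ−j+1]` is positive definite, and (iii) `⟨X^± v, w⟩ = ⟨v, X^∓ w⟩`,
`⟨H v, w⟩ = ⟨v, H w⟩`: a finite-dimensional unitary highest-weight representation of the
compact real form of `U_q^{fin}(sl₂)`. -/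
theorem stmt10 (n m : ℕ) (hn : 0 < n) (hm : 3 ≤ m) (hcop : Nat.Coprime n m)
    (q : ℂ) (hq : q = Complex.exp (2 * Real.pi * Complex.I * n / m))
    (lam : ℕ) (hlam : 2 * n * lam < m)
    (qint : ℤ → ℂ) (hqint : ∀ k : ℤ, qint k = (q ^ k - q ^ (-k)) / (q - q⁻¹))
    (e : ℕ → Fin (lam + 1) → ℂ)
    (he : ∀ k : ℕ, e k =
      if h : k < lam + 1 then Pi.single (⟨k, h⟩ : Fin (lam + 1)) (1 : ℂ) else 0)
    (H Xp Xm : (Fin (lam + 1) → ℂ) →ₗ[ℂ] (Fin (lam + 1) → ℂ))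
    (hH : ∀ k : ℕ, k ≤ lam → H (e k) = ((lam : ℂ) - 2 * k) • e k)
    (hXm : ∀ k : ℕ, k ≤ lam → Xm (e k) = e (k + 1))
    (hXp : ∀ k : ℕ, k ≤ lam →
      Xp (e k) = (qint k * qint ((lam : ℤ) - k + 1)) • e (k - 1))
    (g : ℕ → ℂ)
    (hg : ∀ k : ℕ, g k = ∏ j ∈ Finset.range k, qint (j + 1) * qint ((lam : ℤ) - (j + 1) + 1))
    (B : (Fin (lam + 1) → ℂ) → (Fin (lam + 1) → ℂ) → ℂ)
    (hB : ∀ v w, B v w = ∑ k : Fin (lam + 1), (starRingEnd ℂ) (v k) * w k * g (k : ℕ)) :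
    -- (i) commutation relations
    (H ∘ₗ Xp - Xp ∘ₗ H = (2 : ℂ) • Xp) ∧
    (H ∘ₗ Xm - Xm ∘ₗ H = (-2 : ℂ) • Xm) ∧
    (∀ k : ℕ, k ≤ lam →
      Xp (Xm (e k)) - Xm (Xp (e k)) = qint ((lam : ℤ) - 2 * k) • e k) ∧
    -- (ii) positivity
    (∀ j : ℕ, 1 ≤ j → j ≤ lam →
      (qint j * qint ((lam : ℤ) - j + 1)).im = 0 ∧
      0 < (qint j * qint ((lam : ℤ) - j + 1)).re) ∧
    (∀ k l : ℕ, k ≤ lam → l ≤ lam → B (e k) (e l) = if k = l then g k else 0) ∧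
    (∀ v : Fin (lam + 1) → ℂ, v ≠ 0 → (B v v).im = 0 ∧ 0 < (B v v).re) ∧
    -- (iii) unitarity for the compact real form
    (∀ v w, B (Xp v) w = B v (Xm w)) ∧
    (∀ v w, B (Xm v) w = B v (Xp w)) ∧
    (∀ v w, B (H v) w = B v (H w)) := by
  set θ : ℝ := 2 * Real.pi * n / m with hθ
  have hmR : (0:ℝ) < m := by positivity
  have hqe : q = Complex.exp (θ * Complex.I) := by
    rw [hq, hθ]; congr 1; push_cast; ring
  have hθpos : 0 < θ := by
    rw [hθ]; have := Real.pi_pos; positivity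
  have hs0 : Real.sin θ ≠ 0 := by
    intro hcon
    rcases Real.sin_eq_zero_iff.mp hcon with ⟨z, hz⟩
    rw [hθ] at hz
    have hzm : (z:ℝ) * m = 2 * n := by
      have hπ : Real.pi ≠ 0 := Real.pi_ne_zero
      field_simp at hz
      apply mul_right_cancel₀ hπ
      rw [hz]
    have hzm' : z * (m:ℤ) = 2 * n := by exact_mod_cast hzm
    have hdvd : (m:ℤ) ∣ ((2 * n : ℕ) : ℤ) := ⟨z, by push_cast; linear_combination -1 * hzm'⟩
    have hdvd2 : m ∣ 2 * n := by exact_mod_cast hdvd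
    have h2 : m ∣ 2 := (Nat.Coprime.dvd_of_dvd_mul_right hcop.symm hdvd2)
    have := Nat.le_of_dvd (by norm_num) h2
    omega
  have hqs : ∀ k : ℤ, q ^ k - q ^ (-k) = 2 * (Real.sin (k * θ) : ℂ) * Complex.I := by
    intro k
    have h1 : ∀ j : ℤ, q ^ j = Complex.exp (((j : ℝ) * θ : ℝ) * Complex.I) := by
      intro j
      rw [hqe, ← Complex.exp_int_mul]
      congr 1; push_cast; ring
    rw [h1 k, h1 (-k), Complex.exp_mul_I, Complex.exp_mul_I]
    have e1 : ((((-k:ℤ):ℝ) * θ : ℝ) : ℂ) = -((((k:ℤ):ℝ) * θ : ℝ) : ℂ) := by push_cast; ring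
    rw [e1, Complex.cos_neg, Complex.sin_neg, ← Complex.ofReal_sin]
    ring
  have hrq : ∀ k : ℤ, qint k = ((Real.sin (k*θ) / Real.sin θ : ℝ) : ℂ) := by
    intro k
    have hd : q - q⁻¹ = 2 * (Real.sin θ : ℂ) * Complex.I := by
      have h := hqs 1
      rw [zpow_one, zpow_neg, zpow_one] at h
      rw [h]; norm_num
    rw [hqint, hqs k, hd, mul_div_mul_right _ _ Complex.I_ne_zero,
      mul_div_mul_left _ _ (two_ne_zero), Complex.ofReal_div]
  have qint0 : qint 0 = 0 := by rw [hrq]; simp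
  have hconj : ∀ k : ℤ, (starRingEnd ℂ) (qint k) = qint k := by
    intro k; rw [hrq]; exact Complex.conj_ofReal _
  have hsinpos : ∀ j : ℤ, 1 ≤ j → j ≤ lam → 0 < Real.sin (j*θ) := by
    intro j h1 h2
    apply Real.sin_pos_of_pos_of_lt_pi
    · have : (0:ℝ) < j := by exact_mod_cast h1
      positivity
    · have hj : (j:ℝ) ≤ lam := by exact_mod_cast h2
      have hlamR : 2*(n:ℝ)*lam < m := by exact_mod_cast hlam
      have hnR : (1:ℝ) ≤ n := by exact_mod_cast hn
      rw [hθ, show (j:ℝ) * (2*Real.pi*n/m) = (2*n*j)*Real.pi/m by ring,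
        div_lt_iff₀ hmR]
      have h2nj : 2*(n:ℝ)*j < m := by nlinarith
      nlinarith [Real.pi_pos]
  have hpos : ∀ j : ℕ, 1 ≤ j → j ≤ lam →
      (qint j * qint ((lam : ℤ) - j + 1)).im = 0 ∧
      0 < (qint j * qint ((lam : ℤ) - j + 1)).re := by
    intro j h1 h2
    rw [hrq, hrq, ← Complex.ofReal_mul]
    have hsθ : 0 < Real.sin θ := by
      have h := hsinpos 1 (le_refl 1) (by exact_mod_cast h1.trans h2)
      simp only [Int.cast_one, one_mul] at h
      exact h
    have ha : 0 < Real.sin ((j:ℤ)*θ) := hsinpos j (by exact_mod_cast h1) (by exact_mod_cast h2)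
    have hb := hsinpos ((lam:ℤ)-j+1) (by omega) (by omega)
    constructor
    · exact Complex.ofReal_im _
    · rw [Complex.ofReal_re]
      push_cast at ha hb ⊢
      positivity
  have hsinkey : ∀ a b : ℝ, Real.sin (a+θ) * Real.sin (b-a) - Real.sin a * Real.sin (b-a+θ)
      = Real.sin θ * Real.sin (b-a-a) := by
    intro a b
    simp only [Real.sin_add, Real.sin_sub, Real.cos_add, Real.cos_sub]
    ring
  have hqkey : ∀ k : ℕ, qint ((k:ℤ)+1) * qint ((lam:ℤ)-k) - qint k * qint ((lam:ℤ)-k+1)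
      = qint ((lam:ℤ)-2*k) := by
    intro k
    rw [hrq, hrq, hrq, hrq, hrq]
    rw [← Complex.ofReal_mul, ← Complex.ofReal_mul, ← Complex.ofReal_sub]
    norm_cast
    push_cast
    rw [show ((k:ℝ)+1)*θ = (k:ℝ)*θ+θ by ring,
      show ((lam:ℝ)-k)*θ = (lam:ℝ)*θ-(k:ℝ)*θ by ring,
      show ((lam:ℝ)-k+1)*θ = (lam:ℝ)*θ-(k:ℝ)*θ+θ by ring,
      show ((lam:ℝ)-2*k)*θ = (lam:ℝ)*θ-(k:ℝ)*θ-(k:ℝ)*θ by ring]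
    have h := hsinkey ((k:ℝ)*θ) ((lam:ℝ)*θ)
    field_simp
    rw [show θ*((k:ℝ)+1) = (k:ℝ)*θ+θ by ring, show θ*((lam:ℝ)-k) = (lam:ℝ)*θ-(k:ℝ)*θ by ring,
      show θ*((lam:ℝ)-k+1) = (lam:ℝ)*θ-(k:ℝ)*θ+θ by ring,
      show θ*((lam:ℝ)-k-k) = (lam:ℝ)*θ-(k:ℝ)*θ-(k:ℝ)*θ by ring]
    linear_combination h
  -- structural facts about the basis
  have ecomp : ∀ (k:ℕ) (i : Fin (lam+1)), e k i = if k = (i:ℕ) then 1 else 0 := by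
    intro k i
    rw [he]
    split
    · next h => simp [Pi.single_apply, Fin.ext_iff, eq_comm]
    · next h =>
      rw [if_neg (by omega)]
      rfl
  have etop : e (lam+1) = 0 := by rw [he]; simp
  have esingle : ∀ i : Fin (lam+1), e (i:ℕ) = Pi.single i 1 := by
    intro i; rw [he, dif_pos i.isLt]
  have hbasis : ∀ T S : (Fin (lam+1) → ℂ) →ₗ[ℂ] (Fin (lam+1) → ℂ),
      (∀ k : ℕ, k ≤ lam → T (e k) = S (e k)) → T = S := by
    intro T S h
    apply LinearMap.pi_ext
    intro i x
    have h1 : (Pi.single i x : Fin (lam+1) → ℂ) = x • (Pi.single i (1:ℂ) : Fin (lam+1) → ℂ) := by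
      ext j; simp [Pi.single_apply]
    rw [h1, map_smul, map_smul, ← esingle i, h i (Nat.lt_succ_iff.mp i.isLt)]
  -- (i) the commutation relations
  have rel1 : H ∘ₗ Xp - Xp ∘ₗ H = (2 : ℂ) • Xp := by
    apply hbasis
    intro k hk
    simp only [LinearMap.sub_apply, LinearMap.comp_apply, LinearMap.smul_apply]
    cases k with
    | zero =>
      simp [hXp 0 hk, hH 0 hk, qint0]
    | succ j =>
      rw [hXp (j+1) hk, hH (j+1) hk, map_smul, map_smul, hXp (j+1) hk]
      simp only [Nat.add_sub_cancel]
      rw [hH j (by omega), smul_smul, smul_smul, smul_smul, ← sub_smul]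
      congr 1
      push_cast
      ring
  have rel2 : H ∘ₗ Xm - Xm ∘ₗ H = (-2 : ℂ) • Xm := by
    apply hbasis
    intro k hk
    simp only [LinearMap.sub_apply, LinearMap.comp_apply, LinearMap.smul_apply]
    rw [hXm k hk, hH k hk, map_smul, hXm k hk]
    by_cases h : k = lam
    · subst h
      rw [etop]
      simp
    · rw [hH (k+1) (by omega), ← sub_smul]
      congr 1
      push_cast
      ring
  have rel3 : ∀ k : ℕ, k ≤ lam →
      Xp (Xm (e k)) - Xm (Xp (e k)) = qint ((lam : ℤ) - 2 * k) • e k := by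
    intro k hk
    have hA : Xp (Xm (e k)) = (qint ((k:ℤ)+1) * qint ((lam:ℤ)-k)) • e k := by
      by_cases h : k = lam
      · subst h
        rw [hXm k le_rfl, etop, map_zero, show ((k:ℤ) - k) = 0 by ring, qint0]
        simp
      · rw [hXm k hk, hXp (k+1) (by omega)]
        simp only [Nat.add_sub_cancel]
        rw [show (((k+1:ℕ)):ℤ) = (k:ℤ)+1 by push_cast; ring,
          show (lam:ℤ) - ((k:ℤ)+1) + 1 = (lam:ℤ) - k by ring]
    have hB2 : Xm (Xp (e k)) = (qint k * qint ((lam:ℤ)-k+1)) • e k := by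
      cases k with
      | zero =>
        rw [hXp 0 hk]
        simp [qint0]
      | succ j =>
        rw [hXp (j+1) hk, map_smul, Nat.add_sub_cancel, hXm j (by omega)]
    rw [hA, hB2, ← sub_smul, hqkey k]
  -- (ii) B on the basis
  have Bee : ∀ k l : ℕ, k ≤ lam → l ≤ lam → B (e k) (e l) = if k = l then g k else 0 := by
    intro k l hk hl
    rw [hB]
    simp only [ecomp, apply_ite (starRingEnd ℂ), map_one, map_zero, ite_mul, one_mul, zero_mul]
    rw [Finset.sum_eq_single (⟨k, by omega⟩ : Fin (lam+1))]
    · simp only []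
      by_cases h : k = l
      · subst h; simp
      · simp [h, if_neg]
        intro hlk
        omega
    · intro b _ hb
      rw [if_neg (by simp [Fin.ext_iff] at hb ⊢; omega)]
    · intro hmem; exact absurd (Finset.mem_univ _) hmem
  -- g is a positive real
  have hgR : ∀ i : ℕ, i ≤ lam → g i = (((g i).re : ℝ) : ℂ) ∧ 0 < (g i).re := by
    intro i hi
    have key : g i = ((∏ j ∈ Finset.range i, (qint ((j:ℤ)+1) * qint ((lam:ℤ) - ((j:ℤ)+1) + 1)).re : ℝ) : ℂ) := by
      rw [hg, Complex.ofReal_prod]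
      apply Finset.prod_congr rfl
      intro j hj
      have hj' : j + 1 ≤ lam := by have := Finset.mem_range.mp hj; omega
      have h := hpos (j+1) (by omega) hj'
      push_cast at h
      apply Complex.ext
      · simp
      · simp [h.1]
    have hpr : 0 < ∏ j ∈ Finset.range i, (qint ((j:ℤ)+1) * qint ((lam:ℤ) - ((j:ℤ)+1) + 1)).re := by
      apply Finset.prod_pos
      intro j hj
      have hj' : j + 1 ≤ lam := by have := Finset.mem_range.mp hj; omega
      have h := hpos (j+1) (by omega) hj'
      push_cast at h
      exact h.2
    constructor
    · rw [key, Complex.ofReal_re]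
    · rw [key, Complex.ofReal_re]; exact hpr
  have posdef : ∀ v : Fin (lam + 1) → ℂ, v ≠ 0 → (B v v).im = 0 ∧ 0 < (B v v).re := by
    intro v hv
    have hterm : ∀ i : Fin (lam+1), (starRingEnd ℂ) (v i) * v i * g (i:ℕ)
        = ((Complex.normSq (v i) * (g (i:ℕ)).re : ℝ) : ℂ) := by
      intro i
      rw [← Complex.normSq_eq_conj_mul_self]
      conv_lhs => rw [(hgR i (Nat.lt_succ_iff.mp i.isLt)).1]
      push_cast
      ring
    have hsum : B v v = ((∑ i : Fin (lam+1), Complex.normSq (v i) * (g (i:ℕ)).re : ℝ) : ℂ) := by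
      rw [hB, Complex.ofReal_sum]
      exact Finset.sum_congr rfl fun i _ => hterm i
    constructor
    · rw [hsum, Complex.ofReal_im]
    · rw [hsum, Complex.ofReal_re]
      obtain ⟨i, hi⟩ := Function.ne_iff.mp hv
      apply Finset.sum_pos'
      · intro j _
        exact mul_nonneg (Complex.normSq_nonneg _) (le_of_lt (hgR j (Nat.lt_succ_iff.mp j.isLt)).2)
      · exact ⟨i, Finset.mem_univ i,
          mul_pos (Complex.normSq_pos.mpr hi) (hgR i (Nat.lt_succ_iff.mp i.isLt)).2⟩
  -- (iii) adjointness
  have hTcomp : ∀ (T : (Fin (lam+1) → ℂ) →ₗ[ℂ] (Fin (lam+1) → ℂ)) (v : Fin (lam+1) → ℂ)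
      (i : Fin (lam+1)), T v i = ∑ j : Fin (lam+1), v j * (T (e (j:ℕ)) i) := by
    intro T v i
    have hv : v = ∑ j : Fin (lam+1), v j • e (j:ℕ) := by
      conv_lhs => rw [pi_eq_sum_univ v]
      apply Finset.sum_congr rfl
      intro j _
      congr 1
      ext t
      rw [ecomp]
      simp [Fin.ext_iff, eq_comm]
    conv_lhs => rw [hv]
    rw [map_sum]
    simp only [map_smul, Finset.sum_apply, Pi.smul_apply, smul_eq_mul]
  have hBexp : ∀ (T S : (Fin (lam+1) → ℂ) →ₗ[ℂ] (Fin (lam+1) → ℂ)),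
      (∀ i j : Fin (lam+1), (starRingEnd ℂ) (T (e (j:ℕ)) i) * g (i:ℕ)
        = S (e (i:ℕ)) j * g (j:ℕ)) →
      ∀ v w, B (T v) w = B v (S w) := by
    intro T S hTS v w
    rw [hB, hB]
    have L : ∀ i : Fin (lam+1), (starRingEnd ℂ) (T v i) * w i * g (i:ℕ)
        = ∑ j : Fin (lam+1), (starRingEnd ℂ) (v j) * ((starRingEnd ℂ) (T (e (j:ℕ)) i) * g (i:ℕ)) * w i := by
      intro i
      rw [hTcomp T v i, map_sum, Finset.sum_mul, Finset.sum_mul]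
      apply Finset.sum_congr rfl
      intro j _
      rw [map_mul]
      ring
    have R : ∀ j : Fin (lam+1), (starRingEnd ℂ) (v j) * (S w j) * g (j:ℕ)
        = ∑ i : Fin (lam+1), (starRingEnd ℂ) (v j) * (S (e (i:ℕ)) j * g (j:ℕ)) * w i := by
      intro j
      rw [hTcomp S w j, Finset.mul_sum, Finset.sum_mul]
      apply Finset.sum_congr rfl
      intro i _
      ring
    calc (∑ i : Fin (lam+1), (starRingEnd ℂ) (T v i) * w i * g (i:ℕ))
        = ∑ i : Fin (lam+1), ∑ j : Fin (lam+1),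
            (starRingEnd ℂ) (v j) * ((starRingEnd ℂ) (T (e (j:ℕ)) i) * g (i:ℕ)) * w i := by
          exact Finset.sum_congr rfl fun i _ => L i
      _ = ∑ j : Fin (lam+1), ∑ i : Fin (lam+1),
            (starRingEnd ℂ) (v j) * ((starRingEnd ℂ) (T (e (j:ℕ)) i) * g (i:ℕ)) * w i :=
          Finset.sum_comm
      _ = ∑ j : Fin (lam+1), ∑ i : Fin (lam+1),
            (starRingEnd ℂ) (v j) * (S (e (i:ℕ)) j * g (j:ℕ)) * w i := by
          apply Finset.sum_congr rfl; intro j _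
          apply Finset.sum_congr rfl; intro i _
          rw [hTS i j]
      _ = ∑ j : Fin (lam+1), (starRingEnd ℂ) (v j) * (S w j) * g (j:ℕ) := by
          exact Finset.sum_congr rfl fun j _ => (R j).symm
  have hgrec : ∀ t : ℕ, g (t+1) = g t * (qint ((t:ℤ)+1) * qint ((lam:ℤ) - ((t:ℤ)+1) + 1)) := by
    intro t
    rw [hg, hg, Finset.prod_range_succ]
  have claim1 : ∀ i j : Fin (lam+1), (starRingEnd ℂ) (Xp (e (j:ℕ)) i) * g (i:ℕ)
      = Xm (e (i:ℕ)) j * g (j:ℕ) := by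
    intro i j
    rw [hXp (j:ℕ) (Nat.lt_succ_iff.mp j.isLt), hXm (i:ℕ) (Nat.lt_succ_iff.mp i.isLt)]
    rw [Pi.smul_apply, smul_eq_mul, map_mul, map_mul, hconj, hconj]
    rw [ecomp, ecomp]
    by_cases h : (i:ℕ) + 1 = (j:ℕ)
    · rw [if_pos (by omega), if_pos h]
      rw [show (j:ℕ) = (i:ℕ)+1 from h.symm, hgrec (i:ℕ)]
      simp only [map_one]
      push_cast
      ring
    · rw [if_neg h]
      by_cases h2 : (j:ℕ) - 1 = (i:ℕ)
      · have hj0 : (j:ℕ) = 0 := by omega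
        have hi0 : (i:ℕ) = 0 := by omega
        rw [if_pos h2, hj0]
        simp only [map_one]
        push_cast
        rw [qint0]
        ring
      · rw [if_neg h2]
        simp only [map_zero]
        ring
  have claim2 : ∀ i j : Fin (lam+1), (starRingEnd ℂ) (Xm (e (j:ℕ)) i) * g (i:ℕ)
      = Xp (e (i:ℕ)) j * g (j:ℕ) := by
    intro i j
    rw [hXm (j:ℕ) (Nat.lt_succ_iff.mp j.isLt), hXp (i:ℕ) (Nat.lt_succ_iff.mp i.isLt)]
    rw [Pi.smul_apply, smul_eq_mul, ecomp, ecomp]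
    by_cases h : (j:ℕ) + 1 = (i:ℕ)
    · rw [if_pos h, if_pos (by omega)]
      rw [show (i:ℕ) = (j:ℕ)+1 from h.symm, hgrec (j:ℕ)]
      simp only [map_one]
      push_cast
      ring
    · rw [if_neg h]
      by_cases h2 : (i:ℕ) - 1 = (j:ℕ)
      · have hi0 : (i:ℕ) = 0 := by omega
        have hj0 : (j:ℕ) = 0 := by omega
        rw [if_pos h2, hi0]
        push_cast
        rw [qint0]
        simp
      · rw [if_neg h2]
        simp
  have claimH : ∀ i j : Fin (lam+1), (starRingEnd ℂ) (H (e (j:ℕ)) i) * g (i:ℕ)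
      = H (e (i:ℕ)) j * g (j:ℕ) := by
    intro i j
    rw [hH (j:ℕ) (Nat.lt_succ_iff.mp j.isLt), hH (i:ℕ) (Nat.lt_succ_iff.mp i.isLt)]
    rw [Pi.smul_apply, smul_eq_mul, Pi.smul_apply, smul_eq_mul, ecomp, ecomp]
    by_cases h : (i:ℕ) = (j:ℕ)
    · rw [if_pos (by omega), if_pos (by omega), h]
      simp only [map_mul, map_sub, Complex.conj_natCast, map_one, map_ofNat]
    · rw [if_neg (by omega), if_neg (by omega)]
      simp
  exact ⟨rel1, rel2, rel3, hpos, Bee, posdef, hBexp Xp Xm claim1, hBexp Xm Xp claim2,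
    hBexp H H claimH⟩
end

section
/- Let m ≥ 4 be even and n an odd positive integer coprime to m; set q = exp(2πi·n/m) and M = m/2 (so q^M = −1). Let λ be a nonnegative integer with 2·n·λ < m, and set μ = λ + M. On V = ℂ^{λ+1} with basis e_0,…,e_λ define H·e_k = (μ − 2k)·e_k, X⁻·e_k = e_{k+1} (with e_{λ+1} := 0), and X⁺·e_k = [k]_q·[μ−k+1]_q·e_{k−1} (with e_{−1} := 0). Then: (i) H·X^± − X^±·H = ±2·X^±, (X⁺X⁻ − X⁻X⁺)·e_k = [μ−2k]_q·e_k for all 0 ≤ k ≤ λ, and (X⁺)^M = (X⁻)^M = 0; (ii) the Hermitian inner product ⟨e_k, e_l⟩ = δ_{kl}·∏_{j=1}^{k} [j]_q·[λ−j+1]_q is positive definite; (iii) with respect to it, ⟨X^±·v, w⟩ = −⟨v, X^∓·w⟩ and ⟨H·v, w⟩ = ⟨v, H·w⟩ for all v, w ∈ V. Thus V is a finite-dimensional unitary highest-weight representation of the noncompact real form (X^±)* = −X^∓, H* = H of U_q^{fin}(sl(2,ℝ)) at the even root of unity q. -/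
lemma qid_aux (q : ℂ) (hq0 : q ≠ 0) (hqs : q - q⁻¹ ≠ 0) (a b : ℤ) :
    (q^(a+1) - q^(-(a+1)))/(q-q⁻¹) * ((q^(b-a) - q^(-(b-a)))/(q-q⁻¹)) -
    (q^a - q^(-a))/(q-q⁻¹) * ((q^(b-a+1) - q^(-(b-a+1)))/(q-q⁻¹)) =
    (q^(b-2*a) - q^(-(b-2*a)))/(q-q⁻¹) := by
  have key : (q^(a+1) - q^(-(a+1))) * (q^(b-a) - q^(-(b-a))) -
      (q^a - q^(-a)) * (q^(b-a+1) - q^(-(b-a+1))) =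
      (q^(b-2*a) - q^(-(b-2*a))) * (q - q⁻¹) := by
    have e1 : q^(a+1) = q^a * q := zpow_add_one₀ hq0 a
    have e3 : q^(b-a) = q^b * (q^a)⁻¹ := by rw [zpow_sub₀ hq0, div_eq_mul_inv]
    have e2 : q^(-(a+1)) = (q^a)⁻¹ * q⁻¹ := by rw [zpow_neg, e1, mul_inv]
    have e4 : q^(-(b-a)) = (q^b)⁻¹ * q^a := by rw [zpow_neg, e3, mul_inv, inv_inv]
    have e5 : q^(b-a+1) = q^b * (q^a)⁻¹ * q := by rw [zpow_add_one₀ hq0, e3]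
    have e6 : q^(-(b-a+1)) = (q^b)⁻¹ * q^a * q⁻¹ := by
      rw [zpow_neg, e5, mul_inv, mul_inv, inv_inv]
    have e7 : q^(b-2*a) = q^b * (q^a)⁻¹ * (q^a)⁻¹ := by
      rw [show b-2*a = b - a - a by ring, zpow_sub₀ hq0, e3, div_eq_mul_inv]
    have e8 : q^(-(b-2*a)) = (q^b)⁻¹ * q^a * q^a := by
      rw [zpow_neg, e7, mul_inv, mul_inv, inv_inv]
    have e0 : q^(-a) = (q^a)⁻¹ := zpow_neg q a
    rw [e1, e2, e3, e4, e5, e6, e7, e8, e0]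
    ring
  rw [div_mul_div_comm, div_mul_div_comm, ← sub_div, key, mul_div_mul_right _ _ hqs]

/-- For even `m ≥ 4`, odd `n` coprime to `m`, `q = exp(2πi n/m)`, `M = m/2`
(so `q^M = −1`), `0 ≤ λ` with `2nλ < m` and `μ = λ + M`, the operators on `V = ℂ^{λ+1}`
given by `H e_k = (μ − 2k) e_k`, `X⁻ e_k = e_{k+1}` (`e_{λ+1} := 0`),
`X⁺ e_k = [k][μ−k+1] e_{k−1}` satisfy (i) the `U_q(sl₂)` relations and
`(X⁺)^M = (X⁻)^M = 0`, (ii) the Hermitian form with `⟨e_k, e_l⟩ = δ_{kl}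
∏_{j=1}^k [j][λ−j+1]` is positive definite, and (iii) `⟨X^± v, w⟩ = −⟨v, X^∓ w⟩`,
`⟨H v, w⟩ = ⟨v, H w⟩`: a finite-dimensional unitary highest-weight representation of the
noncompact real form `(X^±)* = −X^∓`, `H* = H` of `U_q^{fin}(sl(2,ℝ))` at the even root
of unity `q`. -/
theorem stmt11 (n m : ℕ) (hm4 : 4 ≤ m) (hmeven : Even m) (hn : 0 < n) (hnodd : Odd n)
    (hcop : Nat.Coprime n m)
    (q : ℂ) (hq : q = Complex.exp (2 * Real.pi * Complex.I * n / m))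
    (M : ℕ) (hM : M = m / 2)
    (lam : ℕ) (hlam : 2 * n * lam < m)
    (mu : ℕ) (hmu : mu = lam + M)
    (qint : ℤ → ℂ) (hqint : ∀ k : ℤ, qint k = (q ^ k - q ^ (-k)) / (q - q⁻¹))
    (e : ℕ → Fin (lam + 1) → ℂ)
    (he : ∀ k : ℕ, e k =
      if h : k < lam + 1 then Pi.single (⟨k, h⟩ : Fin (lam + 1)) (1 : ℂ) else 0)
    (H Xp Xm : (Fin (lam + 1) → ℂ) →ₗ[ℂ] (Fin (lam + 1) → ℂ))
    (hH : ∀ k : ℕ, k ≤ lam → H (e k) = ((mu : ℂ) - 2 * k) • e k)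
    (hXm : ∀ k : ℕ, k ≤ lam → Xm (e k) = e (k + 1))
    (hXp : ∀ k : ℕ, k ≤ lam →
      Xp (e k) = (qint k * qint ((mu : ℤ) - k + 1)) • e (k - 1))
    (g : ℕ → ℂ)
    (hg : ∀ k : ℕ, g k = ∏ j ∈ Finset.range k, qint (j + 1) * qint ((lam : ℤ) - (j + 1) + 1))
    (B : (Fin (lam + 1) → ℂ) → (Fin (lam + 1) → ℂ) → ℂ)
    (hB : ∀ v w, B v w = ∑ k : Fin (lam + 1), (starRingEnd ℂ) (v k) * w k * g (k : ℕ)) :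
    -- q is an even root of unity
    (q ^ M = -1) ∧
    -- (i) commutation relations and nilpotency
    (H ∘ₗ Xp - Xp ∘ₗ H = (2 : ℂ) • Xp) ∧
    (H ∘ₗ Xm - Xm ∘ₗ H = (-2 : ℂ) • Xm) ∧
    (∀ k : ℕ, k ≤ lam →
      Xp (Xm (e k)) - Xm (Xp (e k)) = qint ((mu : ℤ) - 2 * k) • e k) ∧
    (Xp ^ M = 0) ∧ (Xm ^ M = 0) ∧
    -- (ii) positivity
    (∀ k l : ℕ, k ≤ lam → l ≤ lam → B (e k) (e l) = if k = l then g k else 0) ∧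
    (∀ v : Fin (lam + 1) → ℂ, v ≠ 0 → (B v v).im = 0 ∧ 0 < (B v v).re) ∧
    -- (iii) unitarity for the noncompact real form
    (∀ v w, B (Xp v) w = -B v (Xm w)) ∧
    (∀ v w, B (Xm v) w = -B v (Xp w)) ∧
    (∀ v w, B (H v) w = B v (H w)) := by
  -- ## basic setup
  set θ : ℝ := 2 * Real.pi * n / m with hθdef
  have hq0 : q ≠ 0 := by rw [hq]; exact Complex.exp_ne_zero _
  have hqθ : q = Complex.exp ((θ:ℂ) * Complex.I) := by
    rw [hq, hθdef]; push_cast; ring_nf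
  have hzpow : ∀ z : ℤ, q ^ z = Complex.exp (((z * θ : ℝ):ℂ) * Complex.I) := by
    intro z
    rw [hqθ, ← Complex.exp_int_mul]
    congr 1; push_cast; ring
  have hsin : ∀ z : ℤ, q ^ z - q ^ (-z) = 2 * (Real.sin (z * θ) : ℂ) * Complex.I := by
    intro z
    rw [hzpow, hzpow, Complex.exp_mul_I, Complex.exp_mul_I]
    have h1 : ((-z : ℤ) * θ : ℝ) = -((z:ℝ) * θ) := by push_cast; ring
    rw [h1, Complex.ofReal_neg, Complex.cos_neg, Complex.sin_neg, ← Complex.ofReal_sin]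
    push_cast
    ring
  have hmpos : (0:ℝ) < m := by
    have : 0 < m := by omega
    exact_mod_cast this
  have hnpos : (0:ℝ) < n := by exact_mod_cast hn
  have hθpos : 0 < θ := by rw [hθdef]; positivity
  have hsθ : Real.sin θ ≠ 0 := by
    intro h0
    rw [Real.sin_eq_zero_iff] at h0
    obtain ⟨k, hk⟩ := h0
    have hpi : (Real.pi) ≠ 0 := Real.pi_ne_zero
    have hkm : (k:ℝ) * m = 2 * n := by
      rw [hθdef] at hk
      field_simp at hk
      have h2 : (k:ℝ)*m*Real.pi = 2*n*Real.pi := by linear_combination Real.pi * hk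
      exact mul_right_cancel₀ hpi h2
    have hkm' : (k : ℤ) * m = 2 * n := by exact_mod_cast hkm
    have hdvd : (m:ℤ) ∣ 2 * n := ⟨k, by linarith [hkm']⟩
    have hdvd' : m ∣ 2 * n := by exact_mod_cast hdvd
    have : m ∣ 2 := (Nat.Coprime.dvd_of_dvd_mul_right (hcop.symm)) hdvd'
    have := Nat.le_of_dvd (by norm_num) this
    omega
  have hqsub : q - q⁻¹ = 2 * (Real.sin θ : ℂ) * Complex.I := by
    have h1 := hsin 1
    simpa [zpow_one] using h1
  have hqs0 : q - q⁻¹ ≠ 0 := by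
    rw [hqsub]
    exact mul_ne_zero (mul_ne_zero two_ne_zero (Complex.ofReal_ne_zero.mpr hsθ))
      Complex.I_ne_zero
  have hqreal : ∀ z : ℤ, qint z = ((Real.sin (z * θ) / Real.sin θ : ℝ) : ℂ) := by
    intro z
    rw [hqint, hsin, hqsub, Complex.ofReal_div]
    have h2I : (2:ℂ) * Complex.I ≠ 0 := mul_ne_zero two_ne_zero Complex.I_ne_zero
    calc (2 * (Real.sin (z*θ):ℂ) * Complex.I) / (2 * (Real.sin θ:ℂ) * Complex.I)
        = ((Real.sin (z*θ):ℂ) * (2 * Complex.I)) / ((Real.sin θ:ℂ) * (2 * Complex.I)) := by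
          ring_nf
      _ = (Real.sin (z*θ):ℂ) / (Real.sin θ:ℂ) := mul_div_mul_right _ _ h2I
  have hconj : ∀ z : ℤ, (starRingEnd ℂ) (qint z) = qint z := by
    intro z; rw [hqreal]; exact Complex.conj_ofReal _
  have qint0 : qint 0 = 0 := by rw [hqint]; simp
  have qint1 : qint 1 = 1 := by
    rw [hqint, zpow_one, zpow_neg, zpow_one]
    exact div_self hqs0
  -- ## q^M = -1
  have hm0 : (m:ℂ) ≠ 0 := by
    simp only [ne_eq, Nat.cast_eq_zero]; omega
  have h2M : 2 * M = m := by
    obtain ⟨r, hr⟩ := hmeven; omega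
  have hqM : q ^ M = -1 := by
    rw [hq, ← Complex.exp_nat_mul]
    have harg : (M:ℂ) * (2 * Real.pi * Complex.I * n / m) = n * (Real.pi * Complex.I) := by
      have hmm : (m:ℂ) = 2 * M := by exact_mod_cast h2M.symm
      rw [hmm]
      have hM0 : (M:ℂ) ≠ 0 := by simp only [ne_eq, Nat.cast_eq_zero]; omega
      field_simp
    rw [harg, Complex.exp_nat_mul, Complex.exp_pi_mul_I, Odd.neg_one_pow hnodd]
  have hqMz : q ^ (M:ℤ) = -1 := by rw [zpow_natCast, hqM]
  have hshift : ∀ z : ℤ, qint (z + M) = -qint z := by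
    intro z
    rw [hqint, hqint]
    have h1 : q ^ (z + M) = -(q^z) := by rw [zpow_add₀ hq0, hqMz]; ring
    have h2 : q ^ (-(z + (M:ℤ))) = -(q^(-z)) := by
      rw [neg_add, zpow_add₀ hq0, zpow_neg q (M:ℤ), hqMz]
      norm_num
    rw [h1, h2, show (-(q^z)) - (-(q^(-z))) = -(q^z - q^(-z)) by ring, neg_div]
  have hneg : ∀ z : ℤ, qint (-z) = -qint z := by
    intro z
    rw [hqint, hqint, neg_neg, show q^(-z) - q^z = -(q^z - q^(-z)) by ring, neg_div]
  have qintM : qint (M:ℤ) = 0 := by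
    have h := hshift 0
    rwa [zero_add, qint0, neg_zero] at h
  have qid : ∀ a : ℤ, qint (a+1) * qint ((mu:ℤ) - a) - qint a * qint ((mu:ℤ) - a + 1)
      = qint ((mu:ℤ) - 2*a) := by
    intro a
    rw [hqint, hqint, hqint, hqint, hqint]
    exact qid_aux q hq0 hqs0 a mu
  -- ## basis facts
  have he0 : ∀ k : ℕ, lam < k → e k = 0 := by
    intro k h; rw [he]; exact dif_neg (by omega)
  have hek : ∀ (k : ℕ) (h : k ≤ lam),
      e k = Pi.single (⟨k, by omega⟩ : Fin (lam+1)) (1:ℂ) := by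
    intro k h; rw [he, dif_pos]
  have hes : ∀ i : Fin (lam+1), Pi.single i (1:ℂ) = e (i:ℕ) := by
    intro i
    rw [hek (i:ℕ) (Nat.lt_succ_iff.mp i.isLt)]
  have hext : ∀ S T : (Fin (lam+1) → ℂ) →ₗ[ℂ] (Fin (lam+1) → ℂ),
      (∀ k : ℕ, k ≤ lam → S (e k) = T (e k)) → S = T := by
    intro S T h
    apply Module.Basis.ext (Pi.basisFun ℂ (Fin (lam+1)))
    intro i
    have hb : (Pi.basisFun ℂ (Fin (lam+1))) i = Pi.single i 1 := by
      simp [Pi.basisFun_apply]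
    rw [hb, hes i]
    exact h i (Nat.lt_succ_iff.mp i.isLt)
  have hlamM : lam < M := by
    have h1 : 2*1*lam ≤ 2*n*lam := Nat.mul_le_mul_right _ (by omega)
    omega
  -- ## goal 2
  have goal2 : H ∘ₗ Xp - Xp ∘ₗ H = (2:ℂ) • Xp := by
    apply hext
    intro k hk
    simp only [LinearMap.sub_apply, LinearMap.comp_apply, LinearMap.smul_apply]
    rcases k with _ | j
    · rw [hH 0 (by omega), map_smul, hXp 0 (by omega)]
      simp [qint0]
    · rw [hXp (j+1) hk, map_smul, hH (j+1) hk, map_smul, hXp (j+1) hk]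
      simp only [Nat.add_sub_cancel]
      rw [hH j (by omega), smul_smul, smul_smul, smul_smul, ← sub_smul]
      congr 1
      push_cast
      ring
  -- ## goal 3
  have goal3 : H ∘ₗ Xm - Xm ∘ₗ H = (-2:ℂ) • Xm := by
    apply hext
    intro k hk
    simp only [LinearMap.sub_apply, LinearMap.comp_apply, LinearMap.smul_apply]
    rcases eq_or_lt_of_le hk with heq | hlt
    · subst heq
      rw [hXm k le_rfl, he0 (k+1) (by omega), hH k le_rfl, map_zero, map_smul,
        hXm k le_rfl, he0 (k+1) (by omega)]
      simp
    · rw [hXm k hk, hH (k+1) (by omega), hH k hk, map_smul, hXm k hk, ← sub_smul]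
      congr 1
      push_cast
      ring
  -- ## goal 4
  have goal4 : ∀ k : ℕ, k ≤ lam →
      Xp (Xm (e k)) - Xm (Xp (e k)) = qint ((mu:ℤ) - 2*k) • e k := by
    intro k hk
    rcases eq_or_lt_of_le hk with heq | hlt
    · subst heq
      rw [hXm k le_rfl, he0 (k+1) (by omega), map_zero, hXp k le_rfl, map_smul]
      have h1 : qint ((mu:ℤ) - k + 1) = -1 := by
        rw [hmu]
        push_cast
        rw [show (k:ℤ) + (M:ℤ) - (k:ℤ) + 1 = 1 + (M:ℤ) by ring, hshift 1, qint1]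
      have h2 : qint ((mu:ℤ) - 2*k) = qint (k:ℤ) := by
        rw [hmu]
        push_cast
        rw [show (k:ℤ) + (M:ℤ) - 2*(k:ℤ) = -(k:ℤ) + (M:ℤ) by ring, hshift (-(k:ℤ)),
          hneg, neg_neg]
      rw [h1, h2]
      rcases Nat.eq_zero_or_pos k with h0 | hpos
      · subst h0
        simp [qint0]
      · rw [hXm (k-1) (by omega), show k - 1 + 1 = k by omega, zero_sub, ← neg_smul]
        congr 1
        ring
    · rw [hXm k (le_of_lt hlt), hXp (k+1) hlt, hXp k hk, map_smul]
      simp only [Nat.add_sub_cancel]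
      rcases Nat.eq_zero_or_pos k with h0 | hpos
      · subst h0
        rw [hXm 0 (by omega)]
        simp only [Nat.cast_zero, qint0, zero_mul, zero_smul, smul_zero, sub_zero]
        have ha : ((0+1:ℕ):ℤ) = 1 := by norm_num
        rw [ha, show (mu:ℤ) - 1 + 1 = (mu:ℤ) - 2*0 by ring, qint1, one_mul]
      · rw [hXm (k-1) (by omega), show k - 1 + 1 = k by omega, ← sub_smul]
        congr 1
        rw [show ((k+1:ℕ):ℤ) = (k:ℤ)+1 by push_cast; ring,
          show (mu:ℤ) - ((k:ℤ)+1) + 1 = (mu:ℤ) - (k:ℤ) by ring]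
        exact qid (k:ℤ)
  -- ## goal 5 : Xp^M = 0
  have hXpnil : ∀ k : ℕ, k ≤ lam → (Xp ^ (k+1)) (e k) = 0 := by
    intro k
    induction k with
    | zero =>
      intro _
      rw [pow_one, hXp 0 (by omega)]
      simp [qint0]
    | succ j ih =>
      intro hk
      rw [pow_succ, Module.End.mul_apply, hXp (j+1) hk, map_smul]
      simp only [Nat.add_sub_cancel]
      rw [ih (by omega), smul_zero]
  have goal5 : Xp ^ M = 0 := by
    apply hext
    intro k hk
    have hM' : M = (M - (k+1)) + (k+1) := by omega
    rw [hM', pow_add, Module.End.mul_apply, hXpnil k hk, map_zero]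
    simp
  -- ## goal 6 : Xm^M = 0
  have hXm' : ∀ k : ℕ, Xm (e k) = e (k+1) := by
    intro k
    by_cases h : k ≤ lam
    · exact hXm k h
    · rw [he0 k (by omega), he0 (k+1) (by omega), map_zero]
  have hXmpow : ∀ j k : ℕ, (Xm ^ j) (e k) = e (k + j) := by
    intro j
    induction j with
    | zero => intro k; simp
    | succ i ih =>
      intro k
      rw [pow_succ, Module.End.mul_apply, hXm' k, ih (k+1), show k+1+i = k+(i+1) by omega]
  have goal6 : Xm ^ M = 0 := by
    apply hext
    intro k hk
    rw [hXmpow M k, he0 (k + M) (by omega)]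
    simp
  -- ## small B lemmas
  have hB0 : ∀ w, B 0 w = 0 := by intro w; rw [hB]; simp
  have hB0' : ∀ v, B v 0 = 0 := by intro v; rw [hB]; simp
  have hBsmul1 : ∀ (c : ℂ) u w, B (c • u) w = (starRingEnd ℂ) c * B u w := by
    intro c u w
    rw [hB, hB, Finset.mul_sum]
    apply Finset.sum_congr rfl
    intro k _
    simp only [Pi.smul_apply, smul_eq_mul, map_mul]
    ring
  have hBsmul2 : ∀ (c : ℂ) v u, B v (c • u) = c * B v u := by
    intro c v u
    rw [hB, hB, Finset.mul_sum]
    apply Finset.sum_congr rfl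
    intro k _
    simp only [Pi.smul_apply, smul_eq_mul]
    ring
  have hvdec : ∀ v : Fin (lam+1) → ℂ, v = ∑ i, v i • (Pi.single i (1:ℂ) : Fin (lam+1) → ℂ) := by
    intro v
    funext j
    rw [Finset.sum_apply]
    simp [Pi.single_apply]
  have hBs : ∀ (i : Fin (lam+1)) (w : Fin (lam+1) → ℂ),
      B (Pi.single i (1:ℂ)) w = w i * g (i:ℕ) := by
    intro i w
    rw [hB, Finset.sum_eq_single i]
    · simp
    · intro b _ hne
      rw [Pi.single_apply, if_neg hne, map_zero, zero_mul, zero_mul]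
    · intro hmem; exact absurd (Finset.mem_univ _) hmem
  have hBs' : ∀ (v : Fin (lam+1) → ℂ) (j : Fin (lam+1)),
      B v (Pi.single j (1:ℂ)) = (starRingEnd ℂ) (v j) * g (j:ℕ) := by
    intro v j
    rw [hB, Finset.sum_eq_single j]
    · simp
    · intro b _ hne
      rw [Pi.single_apply, if_neg hne, mul_zero, zero_mul]
    · intro hmem; exact absurd (Finset.mem_univ _) hmem
  -- ## goal 7 : B on basis
  have hBe : ∀ k l : ℕ, k ≤ lam → l ≤ lam → B (e k) (e l) = if k = l then g k else 0 := by
    intro k l hk hl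
    rw [hek k hk, hek l hl, hBs, Pi.single_apply]
    by_cases hkl : k = l
    · subst hkl
      simp
    · simp [Fin.mk.injEq, hkl]
  have hL0 : ∀ v w, B v w = ∑ i, (starRingEnd ℂ) (v i) * B (Pi.single i (1:ℂ)) w := by
    intro v w
    rw [hB]
    apply Finset.sum_congr rfl
    intro i _
    rw [hBs]
    ring
  have hR0 : ∀ v w, B v w = ∑ j, w j * B v (Pi.single j (1:ℂ)) := by
    intro v w
    rw [hB]
    apply Finset.sum_congr rfl
    intro j _
    rw [hBs']
    ring
  have hL : ∀ (f : (Fin (lam+1) → ℂ) →ₗ[ℂ] (Fin (lam+1) → ℂ)) v w,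
      B (f v) w = ∑ i, (starRingEnd ℂ) (v i) * B (f (Pi.single i (1:ℂ))) w := by
    intro f v w
    have hfv : f v = ∑ i, v i • f ((Pi.single i (1:ℂ) : Fin (lam+1) → ℂ)) := by
      conv_lhs => rw [hvdec v]
      rw [map_sum]
      simp only [map_smul]
    rw [hB, hfv]
    simp only [Finset.sum_apply, Pi.smul_apply, smul_eq_mul, map_sum, map_mul,
      Finset.sum_mul]
    rw [Finset.sum_comm]
    apply Finset.sum_congr rfl
    intro i _
    rw [hB, Finset.mul_sum]
    apply Finset.sum_congr rfl
    intro k _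
    ring
  have hR : ∀ (f : (Fin (lam+1) → ℂ) →ₗ[ℂ] (Fin (lam+1) → ℂ)) v w,
      B v (f w) = ∑ j, w j * B v (f (Pi.single j (1:ℂ))) := by
    intro f v w
    have hfw : f w = ∑ j, w j • f ((Pi.single j (1:ℂ) : Fin (lam+1) → ℂ)) := by
      conv_lhs => rw [hvdec w]
      rw [map_sum]
      simp only [map_smul]
    rw [hB, hfw]
    simp only [Finset.sum_apply, Pi.smul_apply, smul_eq_mul, Finset.mul_sum,
      Finset.sum_mul]
    rw [Finset.sum_comm]
    apply Finset.sum_congr rfl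
    intro j _
    rw [hB, Finset.mul_sum]
    apply Finset.sum_congr rfl
    intro k _
    ring
  have hKey : ∀ (S T : (Fin (lam+1) → ℂ) →ₗ[ℂ] (Fin (lam+1) → ℂ)) (c : ℂ),
      (∀ i j : Fin (lam+1),
        B (S (Pi.single i (1:ℂ))) (Pi.single j (1:ℂ)) =
          c * B (Pi.single i (1:ℂ)) (T (Pi.single j (1:ℂ)))) →
      ∀ v w, B (S v) w = c * B v (T w) := by
    intro S T c h v w
    calc B (S v) w = ∑ i, (starRingEnd ℂ) (v i) * B (S (Pi.single i (1:ℂ))) w := hL S v w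
      _ = ∑ i, (starRingEnd ℂ) (v i) * (c * B (Pi.single i (1:ℂ)) (T w)) := by
          apply Finset.sum_congr rfl
          intro i _
          congr 1
          rw [hR0 (S (Pi.single i (1:ℂ))) w, hR T (Pi.single i (1:ℂ)) w, Finset.mul_sum]
          apply Finset.sum_congr rfl
          intro j _
          rw [h i j]
          ring
      _ = c * ∑ i, (starRingEnd ℂ) (v i) * B (Pi.single i (1:ℂ)) (T w) := by
          rw [Finset.mul_sum]
          apply Finset.sum_congr rfl
          intro i _
          ring
      _ = c * B v (T w) := by rw [← hL0 v (T w)]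
  -- ## step and shift lemmas for g
  have hgstep : ∀ t : ℕ, g (t+1) = g t * (qint ((t:ℤ)+1) * qint ((lam:ℤ) - t)) := by
    intro t
    rw [hg, hg, Finset.prod_range_succ,
      show (lam:ℤ) - ((t:ℤ)+1) + 1 = (lam:ℤ) - t by ring]
  have hmushift : ∀ t : ℕ, qint ((mu:ℤ) - t) = -qint ((lam:ℤ) - t) := by
    intro t
    rw [hmu]
    push_cast
    rw [show (lam:ℤ) + (M:ℤ) - (t:ℤ) = ((lam:ℤ) - (t:ℤ)) + (M:ℤ) by ring, hshift]
  -- ## goal 9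
  have goal9 : ∀ v w, B (Xp v) w = -B v (Xm w) := by
    have hbasis : ∀ i j : Fin (lam+1),
        B (Xp (Pi.single i (1:ℂ))) (Pi.single j (1:ℂ)) =
          (-1) * B (Pi.single i (1:ℂ)) (Xm (Pi.single j (1:ℂ))) := by
      intro i j
      rcases i with ⟨k, hk'⟩
      rcases j with ⟨l, hl'⟩
      have hk : k ≤ lam := by omega
      have hl : l ≤ lam := by omega
      rw [hes ⟨k, hk'⟩, hes ⟨l, hl'⟩]
      show B (Xp (e k)) (e l) = (-1) * B (e k) (Xm (e l))
      rw [hXp k hk, hBsmul1, hBe (k-1) l (by omega) hl, hXm l hl]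
      by_cases hll : l < lam
      · rw [hBe k (l+1) hk (by omega)]
        by_cases hkl : k = l + 1
        · simp only [hkl, Nat.add_sub_cancel, eq_self_iff_true, if_true]
          rw [map_mul, hconj, hconj,
            show (mu:ℤ) - ((l+1:ℕ):ℤ) + 1 = (mu:ℤ) - (l:ℤ) by push_cast; ring,
            hmushift l, hgstep l,
            show ((l+1:ℕ):ℤ) = (l:ℤ)+1 by push_cast; ring]
          ring
        · rw [if_neg hkl]
          by_cases hk1 : k - 1 = l
          · have hk0 : k = 0 := by omega
            rw [if_pos hk1, hk0]
            simp [qint0]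
          · rw [if_neg hk1]
            simp
      · have hleq : l = lam := by omega
        rw [hleq, he0 (lam+1) (by omega), hB0']
        by_cases hk1 : k - 1 = lam
        · have hk0 : k = 0 := by omega
          rw [if_pos hk1, hk0]
          simp [qint0]
        · rw [if_neg hk1]
          simp
    intro v w
    rw [hKey Xp Xm (-1) hbasis v w, neg_one_mul]
  -- ## goal 10
  have goal10 : ∀ v w, B (Xm v) w = -B v (Xp w) := by
    have hbasis : ∀ i j : Fin (lam+1),
        B (Xm (Pi.single i (1:ℂ))) (Pi.single j (1:ℂ)) =
          (-1) * B (Pi.single i (1:ℂ)) (Xp (Pi.single j (1:ℂ))) := by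
      intro i j
      rcases i with ⟨k, hk'⟩
      rcases j with ⟨l, hl'⟩
      have hk : k ≤ lam := by omega
      have hl : l ≤ lam := by omega
      rw [hes ⟨k, hk'⟩, hes ⟨l, hl'⟩]
      show B (Xm (e k)) (e l) = (-1) * B (e k) (Xp (e l))
      rw [hXm k hk, hXp l hl, hBsmul2, hBe k (l-1) hk (by omega)]
      by_cases hkk : k < lam
      · rw [hBe (k+1) l (by omega) hl]
        by_cases hlk : l = k + 1
        · simp only [hlk, Nat.add_sub_cancel, eq_self_iff_true, if_true]
          rw [show (mu:ℤ) - ((k+1:ℕ):ℤ) + 1 = (mu:ℤ) - (k:ℤ) by push_cast; ring,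
            hmushift k, hgstep k,
            show ((k+1:ℕ):ℤ) = (k:ℤ)+1 by push_cast; ring]
          ring
        · rw [if_neg (by omega : ¬ k+1 = l)]
          by_cases hl1 : k = l - 1
          · have hl0 : l = 0 := by omega
            rw [if_pos hl1, hl0]
            simp [qint0]
          · rw [if_neg hl1]
            simp
      · have hkeq : k = lam := by omega
        rw [hkeq, he0 (lam+1) (by omega), hB0]
        by_cases hl1 : lam = l - 1
        · have hl0 : l = 0 := by omega
          rw [if_pos hl1, hl0]
          simp [qint0]
        · rw [if_neg hl1]
          simp
    intro v w
    rw [hKey Xm Xp (-1) hbasis v w, neg_one_mul]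
  -- ## goal 11
  have goal11 : ∀ v w, B (H v) w = B v (H w) := by
    have hbasis : ∀ i j : Fin (lam+1),
        B (H (Pi.single i (1:ℂ))) (Pi.single j (1:ℂ)) =
          (1:ℂ) * B (Pi.single i (1:ℂ)) (H (Pi.single j (1:ℂ))) := by
      intro i j
      rcases i with ⟨k, hk'⟩
      rcases j with ⟨l, hl'⟩
      have hk : k ≤ lam := by omega
      have hl : l ≤ lam := by omega
      rw [hes ⟨k, hk'⟩, hes ⟨l, hl'⟩]
      show B (H (e k)) (e l) = (1:ℂ) * B (e k) (H (e l))
      rw [hH k hk, hH l hl, hBsmul1, hBsmul2, hBe k l hk hl]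
      have hc : (starRingEnd ℂ) ((mu:ℂ) - 2*(k:ℂ)) = (mu:ℂ) - 2*(k:ℂ) := by
        rw [show ((mu:ℂ) - 2*(k:ℂ)) = (((mu:ℝ) - 2*(k:ℝ) : ℝ) : ℂ) by push_cast; ring,
          Complex.conj_ofReal]
      rw [hc]
      by_cases hkl : k = l
      · subst hkl
        simp
      · rw [if_neg hkl]
        simp
    intro v w
    rw [hKey H H 1 hbasis v w, one_mul]
  -- ## goal 8 : positivity
  have hsinpos : ∀ t : ℝ, 1 ≤ t → t ≤ (lam:ℝ) → 0 < Real.sin (t * θ) := by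
    intro t h1 h2
    apply Real.sin_pos_of_pos_of_lt_pi
    · exact mul_pos (by linarith) hθpos
    · have hlam' : ((2*n*lam : ℕ):ℝ) < (m:ℝ) := by exact_mod_cast hlam
      have hlam'' : 2*(n:ℝ)*(lam:ℝ) < (m:ℝ) := by push_cast at hlam'; linarith
      have hstep : t * θ ≤ (lam:ℝ) * θ := mul_le_mul_of_nonneg_right h2 (le_of_lt hθpos)
      apply lt_of_le_of_lt hstep
      rw [hθdef, show (lam:ℝ) * (2*Real.pi*(n:ℝ)/(m:ℝ)) = (2*(n:ℝ)*(lam:ℝ))*Real.pi/(m:ℝ) by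
        ring, div_lt_iff₀ hmpos]
      nlinarith [Real.pi_pos]
  have goal8 : ∀ v : Fin (lam + 1) → ℂ, v ≠ 0 → (B v v).im = 0 ∧ 0 < (B v v).re := by
    set G : ℕ → ℝ := fun k => ∏ j ∈ Finset.range k,
      (Real.sin (((j:ℝ)+1)*θ)/Real.sin θ) * (Real.sin (((lam:ℝ)-(j:ℝ))*θ)/Real.sin θ)
      with hGdef
    have hgG : ∀ k : ℕ, g k = ((G k : ℝ) : ℂ) := by
      intro k
      rw [hg, hGdef]
      push_cast [Complex.ofReal_prod]
      apply Finset.prod_congr rfl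
      intro j _
      rw [hqreal, hqreal]
      push_cast
      ring_nf
    have hGpos : ∀ k : ℕ, k ≤ lam → 0 < G k := by
      intro k hk
      apply Finset.prod_pos
      intro j hj
      have hjk : j < k := Finset.mem_range.mp hj
      have hlge1 : 1 ≤ lam := by omega
      have hsθpos : 0 < Real.sin θ := by
        have := hsinpos 1 le_rfl (by exact_mod_cast hlge1)
        rwa [one_mul] at this
      have hs1 : 0 < Real.sin (((j:ℝ)+1)*θ) := by
        apply hsinpos
        · linarith [Nat.cast_nonneg (α := ℝ) j]
        · have : (j:ℝ) + 1 ≤ (lam:ℝ) := by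
            have : j + 1 ≤ lam := by omega
            exact_mod_cast this
          linarith
      have hs2 : 0 < Real.sin (((lam:ℝ)-(j:ℝ))*θ) := by
        apply hsinpos
        · have : (j:ℝ) ≤ (lam:ℝ) - 1 := by
            have : j + 1 ≤ lam := by omega
            have h2 : (j:ℝ) + 1 ≤ (lam:ℝ) := by exact_mod_cast this
            linarith
          linarith
        · have : (0:ℝ) ≤ (j:ℝ) := Nat.cast_nonneg j
          linarith
      exact mul_pos (div_pos hs1 hsθpos) (div_pos hs2 hsθpos)
    intro v hv
    have hBvv : B v v = ((∑ k : Fin (lam+1), Complex.normSq (v k) * G (k:ℕ) : ℝ) : ℂ) := by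
      rw [hB]
      have hterm : ∀ k : Fin (lam+1),
          (starRingEnd ℂ) (v k) * v k * g (k:ℕ) =
            ((Complex.normSq (v k) * G (k:ℕ) : ℝ) : ℂ) := by
        intro k
        rw [hgG, Complex.ofReal_mul, mul_comm ((starRingEnd ℂ) (v k)) (v k),
          Complex.mul_conj]
      rw [Finset.sum_congr rfl (fun k _ => hterm k)]
      norm_cast
    constructor
    · rw [hBvv]
      exact Complex.ofReal_im _
    · rw [hBvv, Complex.ofReal_re]
      have hex : ∃ i, v i ≠ 0 := by
        by_contra hcon
        push_neg at hcon
        exact hv (funext hcon)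
      obtain ⟨i, hi⟩ := hex
      apply Finset.sum_pos'
      · intro k _
        exact mul_nonneg (Complex.normSq_nonneg _)
          (le_of_lt (hGpos (k:ℕ) (Nat.lt_succ_iff.mp k.isLt)))
      · exact ⟨i, Finset.mem_univ i,
          mul_pos (Complex.normSq_pos.mpr hi) (hGpos (i:ℕ) (Nat.lt_succ_iff.mp i.isLt))⟩
  exact ⟨hqM, goal2, goal3, goal4, goal5, goal6, hBe, goal8, goal9, goal10, goal11⟩
end
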